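/- arXiv:1401.5450 — 11 statements merged into one kernel-verified Lean document; each statement's English description precedes it below -/
import Mathlib

section
/- Let θ be a real number. Suppose there exist real numbers k₀, l₀ > 0 and E, Q > 1 such that for every natural number r there are rational integers p_r and q_r with |q_r| < k₀·Q^r and |q_r·θ - p_r| ≤ l₀·E^{-r}, and such that p_r·q_{r+1} ≠ p_{r+1}·q_r for all r. Then for any rational integers p and q with |q| ≥ 1/(2l₀) one has |θ - p/q| > 1/(c·|q|^{κ+1}), where c = 2k₀·Q·(2l₀E)^κ and κ = log Q / log E. -/
set_option maxHeartbeats 1000000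


theorem approximation_to_irrationality_measure (θ : ℝ) (k₀ l₀ E Q : ℝ)
    (hk₀ : 0 < k₀) (hl₀ : 0 < l₀) (hE : 1 < E) (hQ : 1 < Q)
    (p q : ℕ → ℤ)
    (hqbound : ∀ r : ℕ, |(q r : ℝ)| < k₀ * Q ^ r)
    (happ : ∀ r : ℕ, |(q r : ℝ) * θ - (p r : ℝ)| ≤ l₀ / E ^ r)
    (hnondeg : ∀ r : ℕ, p r * q (r + 1) ≠ p (r + 1) * q r)
    (P' Q' : ℤ) (hQ' : 1 / (2 * l₀) ≤ |(Q' : ℝ)|) :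
    1 / ((2 * k₀ * Q * (2 * l₀ * E) ^ (Real.log Q / Real.log E)) *
        |(Q' : ℝ)| ^ (Real.log Q / Real.log E + 1)) <
      |θ - (P' : ℝ) / (Q' : ℝ)| := by
  set κ := Real.log Q / Real.log E with hκdef
  have hE0 : (0:ℝ) < E := lt_trans one_pos hE
  have hQ0 : (0:ℝ) < Q := lt_trans one_pos hQ
  have hlogE : 0 < Real.log E := Real.log_pos hE
  have hlogQ : 0 < Real.log Q := Real.log_pos hQ
  have hκ0 : 0 ≤ κ := le_of_lt (div_pos hlogQ hlogE)
  have hQ'0 : (0:ℝ) < |(Q':ℝ)| := lt_of_lt_of_le (by positivity) hQ'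
  have hQ'ne : (Q':ℝ) ≠ 0 := by
    intro h; rw [h] at hQ'0; simp at hQ'0
  -- minimal r with 2l₀|Q'| < E^r
  obtain ⟨n, hn⟩ := pow_unbounded_of_one_lt (2 * l₀ * |(Q':ℝ)|) hE
  have hex : ∃ m, 2 * l₀ * |(Q':ℝ)| < E ^ m := ⟨n, hn⟩
  set r := Nat.find hex with hrdef
  have hr : 2 * l₀ * |(Q':ℝ)| < E ^ r := Nat.find_spec hex
  have hr1 : 1 ≤ r := by
    rcases Nat.eq_zero_or_pos r with h0 | h
    · exfalso
      have h2 : 2 * l₀ * |(Q':ℝ)| < 1 := by rw [h0] at hr; simpa using hr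
      have h1 : 1 ≤ 2 * l₀ * |(Q':ℝ)| := by
        rw [div_le_iff₀ (by positivity)] at hQ'
        linarith
      linarith
    · exact h
  have hrm : E ^ (r - 1) ≤ 2 * l₀ * |(Q':ℝ)| := by
    have := Nat.find_min hex (m := r - 1) (by omega)
    linarith [not_lt.mp this]
  have hEr : E ^ r ≤ E * (2 * l₀ * |(Q':ℝ)|) := by
    have h3 : E ^ r = E * E ^ (r-1) := by
      rw [← pow_succ']
      congr 1; omega
    rw [h3]
    exact mul_le_mul_of_nonneg_left hrm (le_of_lt hE0)
  -- choose s with nonproportionality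
  obtain ⟨s, hsr, hsle, hne⟩ : ∃ s, r ≤ s ∧ s ≤ r + 1 ∧ p s * Q' ≠ P' * q s := by
    by_cases h : p r * Q' = P' * q r
    · refine ⟨r + 1, Nat.le_succ r, le_refl _, fun h' => hnondeg r ?_⟩
      have hQ'ne' : Q' ≠ 0 := by exact_mod_cast hQ'ne
      apply mul_right_cancel₀ hQ'ne'
      calc p r * q (r+1) * Q' = (p r * Q') * q (r+1) := by ring
        _ = (P' * q r) * q (r+1) := by rw [h]
        _ = (P' * q (r+1)) * q r := by ring
        _ = (p (r+1) * Q') * q r := by rw [h']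
        _ = p (r+1) * q r * Q' := by ring
    · exact ⟨r, le_refl r, Nat.le_succ r, h⟩
  have hEs : E ^ r ≤ E ^ s := pow_le_pow_right₀ (le_of_lt hE) hsr
  have key1 : (1:ℝ) ≤ |((P' * q s - p s * Q' : ℤ) : ℝ)| := by
    have : (1:ℤ) ≤ |P' * q s - p s * Q'| :=
      Int.one_le_abs (sub_ne_zero.mpr (Ne.symm hne))
    calc (1:ℝ) = ((1:ℤ):ℝ) := by norm_num
      _ ≤ ((|P' * q s - p s * Q'| : ℤ) : ℝ) := by exact_mod_cast this
      _ = |((P' * q s - p s * Q' : ℤ) : ℝ)| := by push_cast; ring_nf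
  set X := |(Q':ℝ) * θ - (P':ℝ)| with hXdef
  have key2 : (1:ℝ) ≤ |(Q':ℝ)| * |(q s:ℝ) * θ - (p s:ℝ)| + |(q s:ℝ)| * X := by
    have hid : ((P' * q s - p s * Q' : ℤ) : ℝ)
        = (Q':ℝ) * ((q s:ℝ) * θ - (p s:ℝ)) - (q s:ℝ) * ((Q':ℝ) * θ - (P':ℝ)) := by
      push_cast; ring
    calc (1:ℝ) ≤ |((P' * q s - p s * Q' : ℤ) : ℝ)| := key1
      _ = |(Q':ℝ) * ((q s:ℝ) * θ - (p s:ℝ)) - (q s:ℝ) * ((Q':ℝ) * θ - (P':ℝ))| := by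
          rw [hid]
      _ ≤ |(Q':ℝ) * ((q s:ℝ) * θ - (p s:ℝ))| + |(q s:ℝ) * ((Q':ℝ) * θ - (P':ℝ))| :=
          abs_sub _ _
      _ = |(Q':ℝ)| * |(q s:ℝ) * θ - (p s:ℝ)| + |(q s:ℝ)| * X := by
          rw [abs_mul, abs_mul]
  have hEspos : (0:ℝ) < E ^ s := by positivity
  have hErs : 2 * l₀ * |(Q':ℝ)| < E ^ s := lt_of_lt_of_le hr hEs
  have h12 : |(Q':ℝ)| * (l₀ / E ^ s) < 1/2 := by
    rw [← mul_div_assoc, div_lt_iff₀ hEspos]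
    nlinarith
  have key3 : 1/2 < |(q s:ℝ)| * X := by
    have hY := happ s
    have : |(Q':ℝ)| * |(q s:ℝ) * θ - (p s:ℝ)| ≤ |(Q':ℝ)| * (l₀ / E ^ s) :=
      mul_le_mul_of_nonneg_left hY (le_of_lt hQ'0)
    linarith
  have hX0 : 0 < X := by
    nlinarith [abs_nonneg ((q s:ℝ)), abs_nonneg ((Q':ℝ) * θ - (P':ℝ))]
  -- rpow estimates
  have hQeq : Q = E ^ κ := by
    rw [Real.rpow_def_of_pos hE0, hκdef, mul_comm, div_mul_cancel₀ _ (ne_of_gt hlogE)]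
    exact (Real.exp_log hQ0).symm
  have h1 : (Q:ℝ) ^ r = (E ^ r : ℝ) ^ κ := by
    rw [hQeq, ← Real.rpow_natCast (E ^ κ) r, ← Real.rpow_mul (le_of_lt hE0),
      mul_comm, Real.rpow_mul (le_of_lt hE0), Real.rpow_natCast]
  have h2 : (E ^ r : ℝ) ^ κ ≤ (2*l₀*E) ^ κ * |(Q':ℝ)| ^ κ := by
    rw [← Real.mul_rpow (by positivity) (le_of_lt hQ'0)]
    apply Real.rpow_le_rpow (by positivity) ?_ hκ0
    calc (E:ℝ) ^ r ≤ E * (2 * l₀ * |(Q':ℝ)|) := hEr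
      _ = 2*l₀*E * |(Q':ℝ)| := by ring
  have hQpow : (Q:ℝ) ^ (r+1) ≤ Q * ((2*l₀*E) ^ κ * |(Q':ℝ)| ^ κ) := by
    have : (Q:ℝ) ^ (r+1) = Q * Q ^ r := by ring
    rw [this]
    exact mul_le_mul_of_nonneg_left (h1 ▸ h2) (le_of_lt hQ0)
  set c := 2 * k₀ * Q * (2*l₀*E) ^ κ with hcdef
  set D := c * |(Q':ℝ)| ^ (κ+1) with hDdef
  have hD0 : 0 < D := by
    apply mul_pos
    · apply mul_pos (by positivity)
      exact Real.rpow_pos_of_pos (by positivity) κ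
    · exact Real.rpow_pos_of_pos hQ'0 _
  have hqs : |(q s:ℝ)| < k₀ * Q ^ (r+1) :=
    lt_of_lt_of_le (hqbound s)
      (mul_le_mul_of_nonneg_left (pow_le_pow_right₀ (le_of_lt hQ) hsle) (le_of_lt hk₀))
  have hbound : 2 * |(q s:ℝ)| * |(Q':ℝ)| < D := by
    have hsplit : |(Q':ℝ)| ^ (κ+1) = |(Q':ℝ)| ^ κ * |(Q':ℝ)| := by
      rw [Real.rpow_add hQ'0, Real.rpow_one]
    have step1 : 2 * |(q s:ℝ)| * |(Q':ℝ)| < 2 * (k₀ * Q ^ (r+1)) * |(Q':ℝ)| := by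
      have := mul_lt_mul_of_pos_right hqs hQ'0
      linarith
    have step2 : 2 * (k₀ * Q ^ (r+1)) * |(Q':ℝ)|
        ≤ 2 * (k₀ * (Q * ((2*l₀*E) ^ κ * |(Q':ℝ)| ^ κ))) * |(Q':ℝ)| := by
      have := mul_le_mul_of_nonneg_left hQpow
        (show (0:ℝ) ≤ 2 * k₀ * |(Q':ℝ)| by positivity)
      linarith
    have step3 : 2 * (k₀ * (Q * ((2*l₀*E) ^ κ * |(Q':ℝ)| ^ κ))) * |(Q':ℝ)| = D := by
      rw [hDdef, hcdef, hsplit]; ring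
    linarith
  have habs : |θ - (P':ℝ)/(Q':ℝ)| = X / |(Q':ℝ)| := by
    have h4 : θ - (P':ℝ)/(Q':ℝ) = ((Q':ℝ) * θ - (P':ℝ))/(Q':ℝ) := by field_simp
    rw [h4, abs_div, hXdef]
  rw [habs, div_lt_div_iff₀ hD0 hQ'0]
  have t1 : X * (2 * |(q s:ℝ)| * |(Q':ℝ)|) < X * D := by
    exact mul_lt_mul_of_pos_left hbound hX0
  have t2 : (1/2) * |(Q':ℝ)| < (|(q s:ℝ)| * X) * |(Q':ℝ)| :=
    mul_lt_mul_of_pos_right key3 hQ'0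
  linarith [t1, t2]
end

section
/- Let m and n be positive integers and α a real number. Define the polynomials p_m(X) = Σ_{ν=0}^{m} C(m-α, m-ν)·C(n+α, ν)·X^ν and q_n(X) = Σ_{ν=0}^{n} C(m-α, ν)·C(n+α, n-ν)·X^ν, where C(β,k) = β(β-1)···(β-k+1)/k! denotes the generalized binomial coefficient. Let x be a complex number such that the closed straight-line segment C from 1 to x does not meet the closed negative real axis (-∞,0], and let all complex powers denote principal branches. Then x^α·q_n(x) - p_m(x) = α·C(m-α, m)·C(n+α, n)·∫_C (t-x)^m·(1-t)^n·t^{α-m-1} dt, the integral being taken along the straight line from 1 to x. -/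
open Finset

/-- Generalized binomial coefficient `C(β, k) = β(β-1)⋯(β-k+1)/k!`. -/
noncomputable def genChoose (β : ℝ) (k : ℕ) : ℝ :=
  (∏ i ∈ Finset.range k, (β - i)) / (Nat.factorial k)

/-- `Ff z M k = ∏_{l<k}(z+l) * ∏_{k<l≤M}(z+l)`. -/
noncomputable def Ff (z : ℝ) (M k : ℕ) : ℝ :=
  (∏ l ∈ Finset.range k, (z + l)) * ∏ l ∈ Finset.Ico (k+1) (M+1), (z + l)

lemma genChoose_mul_fact (β : ℝ) (k : ℕ) :
    genChoose β k * (Nat.factorial k) = ∏ i ∈ Finset.range k, (β - i) := by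
  rw [genChoose, div_mul_cancel₀]
  exact_mod_cast Nat.factorial_ne_zero k

lemma alt_diff (f : ℕ → ℝ) (m j : ℕ) :
    ∑ i ∈ range (m+2), (-1:ℝ)^i * ((m+1).choose i) * f (j+i)
    = (∑ i ∈ range (m+1), (-1:ℝ)^i * (m.choose i) * f (j+i))
      - ∑ i ∈ range (m+1), (-1:ℝ)^i * (m.choose i) * f (j+1+i) := by
  rw [Finset.sum_range_succ' (fun i => (-1:ℝ)^i * ((m+1).choose i) * f (j+i)) (m+1),
      Finset.sum_range_succ' (fun i => (-1:ℝ)^i * (m.choose i) * f (j+i)) m]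
  have h1 : ∀ i ∈ range (m+1),
      (-1:ℝ)^(i+1) * ((m+1).choose (i+1)) * f (j+(i+1))
      = ((-1:ℝ)^(i+1) * (m.choose (i+1)) * f (j+(i+1)))
        + (-((-1:ℝ)^i * (m.choose i) * f (j+1+i))) := by
    intro i _
    have hc : (((m+1).choose (i+1) : ℕ) : ℝ) = m.choose i + m.choose (i+1) := by
      rw [Nat.choose_succ_succ]; push_cast; ring
    have hj : j + (i+1) = j + 1 + i := by omega
    rw [hj, hc]; ring
  rw [Finset.sum_congr rfl h1, Finset.sum_add_distrib]
  rw [Finset.sum_range_succ (fun i => (-1:ℝ)^(i+1) * (m.choose (i+1)) * f (j+(i+1))) m]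
  simp [Nat.choose_succ_self]
  ring

lemma fd (z : ℝ) (M : ℕ) : ∀ (m j : ℕ), j + m ≤ M →
    ∑ i ∈ range (m+1), (-1:ℝ)^i * (m.choose i) * Ff z M (j+i)
    = (Nat.factorial m : ℝ) *
        ((∏ l ∈ range j, (z + l)) * ∏ l ∈ Ico (j+m+1) (M+1), (z + l)) := by
  intro m
  induction m with
  | zero => intro j hj; simp [Ff]
  | succ m ih =>
    intro j hj
    have key := alt_diff (Ff z M) m j
    rw [show m+1+1 = m+2 from rfl, key, ih j (by omega), ih (j+1) (by omega)]
    have e1 : j + 1 + m + 1 = j + m + 2 := by omega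
    have e2 : j + (m+1) + 1 = j + m + 2 := by omega
    rw [e1, e2,
      Finset.prod_eq_prod_Ico_succ_bot (show j+m+1 < M+1 by omega) (fun l => z + (l:ℝ)),
      Finset.prod_range_succ, Nat.factorial_succ]
    push_cast
    ring

lemma head_prod (β : ℝ) (k : ℕ) :
    ∏ l ∈ range k, (-β + l) = (-1)^k * (genChoose β k * (Nat.factorial k)) := by
  rw [genChoose_mul_fact]
  have h : ∀ l ∈ range k, (-β + (l:ℝ)) = (-1) * (β - l) := fun l _ => by ring
  rw [Finset.prod_congr rfl h, Finset.prod_mul_distrib, Finset.prod_const, Finset.card_range]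

lemma tail_prod (m n : ℕ) (α : ℝ) (b : ℕ) (hb2 : b ≤ m+n+1) :
    ∏ l ∈ Ico b (m+n+1), (α - m + l)
    = genChoose ((n:ℝ)+α) (m+n+1-b) * (Nat.factorial (m+n+1-b)) := by
  rw [Finset.prod_Ico_eq_prod_range, genChoose_mul_fact,
      ← Finset.prod_range_reflect (fun i => (n:ℝ) + α - i) (m+n+1-b)]
  apply Finset.prod_congr rfl
  intro i hi
  have hi' : i < m+n+1-b := mem_range.mp hi
  have h1 : m+n+1-b-1-i = m+n-b-i := by omega
  have h2 : ((m+n-b-i : ℕ) : ℝ) = (m:ℝ) + n - b - i := by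
    rw [show m+n-b-i = m+n-(b+i) from by omega, Nat.cast_sub (by omega)]
    push_cast; ring
  rw [h1, h2]
  push_cast
  ring

noncomputable def Kc (m n : ℕ) (α : ℝ) (k : ℕ) : ℝ :=
  (-1)^m / ((Nat.factorial m) * (Nat.factorial n)) * Ff (α - m) (m+n) k

lemma sq_neg_one_pow (k : ℕ) : (-1:ℝ)^k * (-1:ℝ)^k = 1 := by
  rw [← pow_add, show k+k = 2*k from by ring, pow_mul]; norm_num

lemma head_prod' (m : ℕ) (α : ℝ) (k : ℕ) :
    ∏ l ∈ range k, (α - m + l) = (-1)^k * (genChoose ((m:ℝ)-α) k * (Nat.factorial k)) := by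
  rw [← head_prod ((m:ℝ)-α) k]
  exact Finset.prod_congr rfl fun l _ => by ring

lemma Kc_mul (m n : ℕ) (α : ℝ) (k : ℕ) (hk : k ≤ m + n) :
    (α - m + k) * Kc m n α k = α * genChoose ((m:ℝ)-α) m * genChoose ((n:ℝ)+α) n := by
  unfold Kc Ff
  have h1 : (α - m + k) * ((∏ l ∈ range k, (α-(m:ℝ)+l)) * ∏ l ∈ Ico (k+1) (m+n+1), (α-(m:ℝ)+l))
      = ∏ l ∈ range (m+n+1), (α-(m:ℝ)+l) := by
    rw [← Finset.prod_range_mul_prod_Ico (fun l => α - (m:ℝ) + l) (show k ≤ m+n+1 by omega),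
        Finset.prod_eq_prod_Ico_succ_bot (show k < m+n+1 by omega) (fun l => α - (m:ℝ) + l)]
    push_cast; ring
  have h2 : ∏ l ∈ range (m+n+1), (α-(m:ℝ)+l)
      = (∏ l ∈ range m, (α-(m:ℝ)+l)) * ((α-(m:ℝ)+m) * ∏ l ∈ Ico (m+1) (m+n+1), (α-(m:ℝ)+l)) := by
    rw [← Finset.prod_range_mul_prod_Ico (fun l => α - (m:ℝ) + l) (show m ≤ m+n+1 by omega),
        Finset.prod_eq_prod_Ico_succ_bot (show m < m+n+1 by omega) (fun l => α - (m:ℝ) + l)]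
  have h3 := head_prod' m α m
  have h4 := tail_prod m n α (m+1) (by omega)
  rw [show m+n+1-(m+1) = n from by omega] at h4
  have hm : ((Nat.factorial m : ℕ) : ℝ) ≠ 0 := by exact_mod_cast Nat.factorial_ne_zero m
  have hn : ((Nat.factorial n : ℕ) : ℝ) ≠ 0 := by exact_mod_cast Nat.factorial_ne_zero n
  have hs := sq_neg_one_pow m
  calc (α - m + k) * ((-1:ℝ)^m / ((Nat.factorial m) * (Nat.factorial n)) *
        ((∏ l ∈ range k, (α-(m:ℝ)+l)) * ∏ l ∈ Ico (k+1) (m+n+1), (α-(m:ℝ)+l)))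
      = (-1:ℝ)^m / ((Nat.factorial m) * (Nat.factorial n)) *
        ((α - m + k) * ((∏ l ∈ range k, (α-(m:ℝ)+l)) * ∏ l ∈ Ico (k+1) (m+n+1), (α-(m:ℝ)+l))) := by
        ring
    _ = (-1:ℝ)^m / ((Nat.factorial m) * (Nat.factorial n)) *
        ((∏ l ∈ range m, (α-(m:ℝ)+l)) * ((α-(m:ℝ)+m) * ∏ l ∈ Ico (m+1) (m+n+1), (α-(m:ℝ)+l))) := by
        rw [h1, h2]
    _ = α * genChoose ((m:ℝ)-α) m * genChoose ((n:ℝ)+α) n := by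
        rw [h3, h4]
        field_simp
        linear_combination (genChoose ((m:ℝ) - α) m * α *
          genChoose ((n:ℝ) + α) n) * hs

lemma lemA (m n : ℕ) (α : ℝ) (j : ℕ) (hj : j ≤ n) :
    (-1:ℝ)^j * (n.choose j) *
      ∑ i ∈ range (m+1), (-1:ℝ)^(m-i) * (m.choose i) * Kc m n α (i+j)
    = genChoose ((m:ℝ)-α) j * genChoose ((n:ℝ)+α) (n-j) := by
  have hstep : ∀ i ∈ range (m+1),
      (-1:ℝ)^(m-i) * (m.choose i) * Kc m n α (i+j)
      = (-1:ℝ)^m * ((-1)^m / ((Nat.factorial m) * (Nat.factorial n)) *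
          ((-1:ℝ)^i * (m.choose i) * Ff (α - m) (m+n) (j+i))) := by
    intro i hi
    have hi' : i ≤ m := by have := mem_range.mp hi; omega
    have hp : (-1:ℝ)^(m-i) * (-1:ℝ)^i = (-1:ℝ)^m := by
      rw [← pow_add]; congr 1; omega
    have hij : i + j = j + i := by omega
    rw [Kc, hij]
    rw [← hp]
    have hq := sq_neg_one_pow i
    field_simp
    linear_combination (-((m.choose i : ℝ) *
      Ff (α - m) (m+n) (j+i))) * hq
  rw [Finset.sum_congr rfl hstep, ← Finset.mul_sum, ← Finset.mul_sum,
      fd (α - m) (m+n) m j (by omega)]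
  rw [head_prod' m α j, tail_prod m n α (j+m+1) (by omega),
      show m+n+1-(j+m+1) = n-j from by omega]
  have hm : ((Nat.factorial m : ℕ) : ℝ) ≠ 0 := by exact_mod_cast Nat.factorial_ne_zero m
  have hn : ((Nat.factorial n : ℕ) : ℝ) ≠ 0 := by exact_mod_cast Nat.factorial_ne_zero n
  have hfac : ((n.choose j : ℕ) : ℝ) * (Nat.factorial j) * (Nat.factorial (n-j))
      = Nat.factorial n := by
    exact_mod_cast congrArg (Nat.cast (R := ℝ)) (Nat.choose_mul_factorial_mul_factorial hj)
  have hsj := sq_neg_one_pow j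
  have hsm := sq_neg_one_pow m
  field_simp
  linear_combination
    (genChoose ((m:ℝ)-α) j * genChoose ((n:ℝ)+α) (n-j) *
      (-1:ℝ)^j * (-1)^j * (-1)^m * (-1)^m) * hfac
    + (genChoose ((m:ℝ)-α) j * genChoose ((n:ℝ)+α) (n-j) *
      (Nat.factorial n : ℝ) * (-1:ℝ)^j * (-1)^j) * hsm
    + (genChoose ((m:ℝ)-α) j * genChoose ((n:ℝ)+α) (n-j) *
      (Nat.factorial n : ℝ)) * hsj

lemma lemB (m n : ℕ) (α : ℝ) (i : ℕ) (hi : i ≤ m) :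
    (-1:ℝ)^(m-i) * (m.choose i) *
      ∑ j ∈ range (n+1), (-1:ℝ)^j * (n.choose j) * Kc m n α (i+j)
    = genChoose ((m:ℝ)-α) i * genChoose ((n:ℝ)+α) (m-i) := by
  have hstep : ∀ j ∈ range (n+1),
      (-1:ℝ)^j * (n.choose j) * Kc m n α (i+j)
      = ((-1:ℝ)^m / ((Nat.factorial m) * (Nat.factorial n))) *
          ((-1:ℝ)^j * (n.choose j) * Ff (α - m) (m+n) (i+j)) := by
    intro j _
    rw [Kc]; ring
  rw [Finset.sum_congr rfl hstep, ← Finset.mul_sum,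
      fd (α - m) (m+n) n i (by omega)]
  rw [head_prod' m α i, tail_prod m n α (i+n+1) (by omega),
      show m+n+1-(i+n+1) = m-i from by omega]
  have hm : ((Nat.factorial m : ℕ) : ℝ) ≠ 0 := by exact_mod_cast Nat.factorial_ne_zero m
  have hn : ((Nat.factorial n : ℕ) : ℝ) ≠ 0 := by exact_mod_cast Nat.factorial_ne_zero n
  have hfac : ((m.choose i : ℕ) : ℝ) * (Nat.factorial i) * (Nat.factorial (m-i))
      = Nat.factorial m := by
    exact_mod_cast congrArg (Nat.cast (R := ℝ)) (Nat.choose_mul_factorial_mul_factorial hi)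
  have hp : (-1:ℝ)^(m-i) * (-1:ℝ)^i = (-1:ℝ)^m := by
    rw [← pow_add]; congr 1; omega
  have hsm := sq_neg_one_pow m
  field_simp
  linear_combination
    (genChoose ((m:ℝ)-α) i * genChoose ((n:ℝ)+α) (m-i) *
      (-1:ℝ)^m * ((m.choose i : ℝ) * (Nat.factorial i) * (Nat.factorial (m-i)))) * hp
    + (genChoose ((m:ℝ)-α) i * genChoose ((n:ℝ)+α) (m-i) *
      ((m.choose i : ℝ) * (Nat.factorial i) * (Nat.factorial (m-i)))) * hsm
    + (genChoose ((m:ℝ)-α) i * genChoose ((n:ℝ)+α) (m-i)) * hfac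

noncomputable def Hf (m n : ℕ) (α : ℝ) (x t : ℂ) : ℂ :=
  ∑ i ∈ Finset.range (m+1), ∑ j ∈ Finset.range (n+1),
    ((m.choose i : ℂ) * (-x)^(m-i) * (n.choose j : ℂ) * (-1:ℂ)^j *
      ((Kc m n α (i+j) : ℝ) : ℂ)) * t^(i+j)

noncomputable def Hg (m n : ℕ) (α : ℝ) (x t : ℂ) : ℂ :=
  ∑ i ∈ Finset.range (m+1), ∑ j ∈ Finset.range (n+1),
    ((m.choose i : ℂ) * (-x)^(m-i) * (n.choose j : ℂ) * (-1:ℂ)^j *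
      ((Kc m n α (i+j) : ℝ) : ℂ)) * (((i+j : ℕ) : ℂ) * t^(i+j-1))

lemma Hf_hasDerivAt (m n : ℕ) (α : ℝ) (x t : ℂ) :
    HasDerivAt (Hf m n α x) (Hg m n α x t) t := by
  show HasDerivAt (fun t => ∑ i ∈ Finset.range (m+1), ∑ j ∈ Finset.range (n+1),
    ((m.choose i : ℂ) * (-x)^(m-i) * (n.choose j : ℂ) * (-1:ℂ)^j *
      ((Kc m n α (i+j) : ℝ) : ℂ)) * t^(i+j)) _ t
  apply HasDerivAt.fun_sum
  intro i _
  apply HasDerivAt.fun_sum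
  intro j _
  exact (hasDerivAt_pow (i+j) t).const_mul _

lemma key_alg (m n : ℕ) (α : ℝ) (x t : ℂ) :
    ((α:ℂ) - m) * Hf m n α x t + t * Hg m n α x t
    = ((α * genChoose ((m:ℝ)-α) m * genChoose ((n:ℝ)+α) n : ℝ) : ℂ)
        * ((t - x)^m * (1-t)^n) := by
  have hrhs : (t - x)^m * (1-t)^n = ∑ i ∈ Finset.range (m+1), ∑ j ∈ Finset.range (n+1),
      (t^i * (-x)^(m-i) * (m.choose i : ℂ)) * ((-t)^j * 1^(n-j) * (n.choose j : ℂ)) := by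
    rw [show t - x = t + (-x) from by ring, show (1:ℂ) - t = -t + 1 from by ring,
        add_pow, add_pow, Finset.sum_mul_sum]
  rw [Hf, Hg, hrhs, Finset.mul_sum, Finset.mul_sum, Finset.mul_sum, ← Finset.sum_add_distrib]
  apply Finset.sum_congr rfl
  intro i hi
  rw [Finset.mul_sum, Finset.mul_sum, Finset.mul_sum, ← Finset.sum_add_distrib]
  apply Finset.sum_congr rfl
  intro j hj
  have hk : ((α:ℂ) - m + ((i+j : ℕ) : ℂ)) * ((Kc m n α (i+j) : ℝ) : ℂ)
      = ((α * genChoose ((m:ℝ)-α) m * genChoose ((n:ℝ)+α) n : ℝ) : ℂ) := by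
    have h := Kc_mul m n α (i+j)
      (by have := Finset.mem_range.mp hi; have := Finset.mem_range.mp hj; omega)
    calc ((α:ℂ) - m + ((i+j:ℕ):ℂ)) * ((Kc m n α (i+j) : ℝ) : ℂ)
        = (((α - m + (i+j:ℕ)) * Kc m n α (i+j) : ℝ) : ℂ) := by push_cast; ring
      _ = _ := by rw [h]
  have hpow : ((α:ℂ) - m) * t^(i+j) + t * (((i+j : ℕ):ℂ) * t^(i+j-1))
      = ((α:ℂ) - m + ((i+j:ℕ):ℂ)) * t^(i+j) := by
    rcases Nat.eq_zero_or_pos (i+j) with h | h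
    · rw [h]; simp
    · have h2 : t * t^(i+j-1) = t^(i+j) := by
        rw [← pow_succ']
        congr 1
        omega
      linear_combination (((i+j:ℕ):ℂ)) * h2
  have hneg : (-t)^j = (-1:ℂ)^j * t^j := by rw [neg_pow]
  have htt : t^i * t^j = t^(i+j) := (pow_add t i j).symm
  set a := (m.choose i : ℂ)
  set b := (-x)^(m-i)
  set d := (n.choose j : ℂ)
  set e := (-1:ℂ)^j
  set κ := ((Kc m n α (i+j) : ℝ) : ℂ)
  set K := ((α * genChoose ((m:ℝ)-α) m * genChoose ((n:ℝ)+α) n : ℝ) : ℂ)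
  simp only [one_pow]
  linear_combination (a*b*d*e*κ) * hpow + (a*b*d*e*t^(i+j)) * hk
    + (K*a*b*d*t^i) * hneg + (K*a*b*d*e) * htt

lemma Hf_at_x (m n : ℕ) (α : ℝ) (x : ℂ) :
    Hf m n α x x = x^m * ∑ j ∈ Finset.range (n+1),
      ((genChoose ((m:ℝ)-α) j * genChoose ((n:ℝ)+α) (n-j) : ℝ):ℂ) * x^j := by
  rw [Hf, Finset.sum_comm, Finset.mul_sum]
  apply Finset.sum_congr rfl
  intro j hj
  have hj' : j ≤ n := by have := Finset.mem_range.mp hj; omega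
  rw [← lemA m n α j hj']
  push_cast
  rw [Finset.mul_sum, Finset.sum_mul, Finset.mul_sum]
  apply Finset.sum_congr rfl
  intro i hi
  have hi' : i ≤ m := by have := Finset.mem_range.mp hi; omega
  have h1 : (-x)^(m-i) * x^(i+j) = (-1:ℂ)^(m-i) * x^(m+j) := by
    rw [neg_pow, mul_assoc, ← pow_add, show m-i+(i+j) = m+j from by omega]
  have h2 : x^m * x^j = x^(m+j) := (pow_add x m j).symm
  set κ := ((Kc m n α (i+j) : ℝ) : ℂ)
  linear_combination ((m.choose i:ℂ) * (n.choose j:ℂ) * (-1:ℂ)^j * κ) * h1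
    - ((-1:ℂ)^j * (n.choose j:ℂ) * (-1:ℂ)^(m-i) * (m.choose i:ℂ) * κ) * h2

lemma Hf_at_one (m n : ℕ) (α : ℝ) (x : ℂ) :
    Hf m n α x 1 = ∑ ν ∈ Finset.range (m+1),
      ((genChoose ((m:ℝ)-α) (m-ν) * genChoose ((n:ℝ)+α) ν : ℝ):ℂ) * x^ν := by
  rw [Hf, ← Finset.sum_range_reflect
    (fun ν => ((genChoose ((m:ℝ)-α) (m-ν) * genChoose ((n:ℝ)+α) ν : ℝ):ℂ) * x^ν) (m+1)]
  apply Finset.sum_congr rfl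
  intro i hi
  have hi' : i ≤ m := by have := Finset.mem_range.mp hi; omega
  rw [show m+1-1-i = m-i from by omega, show m-(m-i) = i from by omega]
  rw [← lemB m n α i hi']
  push_cast
  rw [Finset.mul_sum, Finset.sum_mul]
  apply Finset.sum_congr rfl
  intro j hj
  have hneg : (-x)^(m-i) = (-1:ℂ)^(m-i) * x^(m-i) := by rw [neg_pow]
  set κ := ((Kc m n α (i+j) : ℝ) : ℂ)
  simp only [one_pow]
  linear_combination ((m.choose i:ℂ) * (n.choose j:ℂ) * (-1:ℂ)^j * κ) * hneg

theorem pade_remainder_integral (m n : ℕ) (hm : 0 < m) (hn : 0 < n) (α : ℝ) (x : ℂ)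
    (hpath : ∀ s : ℝ, s ∈ Set.Icc (0 : ℝ) 1 →
      ¬((1 + (s : ℂ) * (x - 1)).im = 0 ∧ (1 + (s : ℂ) * (x - 1)).re ≤ 0)) :
    x ^ (α : ℂ) * (∑ ν ∈ Finset.range (n + 1),
        ((genChoose ((m : ℝ) - α) ν * genChoose ((n : ℝ) + α) (n - ν) : ℝ) : ℂ) * x ^ ν) -
      (∑ ν ∈ Finset.range (m + 1),
        ((genChoose ((m : ℝ) - α) (m - ν) * genChoose ((n : ℝ) + α) ν : ℝ) : ℂ) * x ^ ν) =
    ((α * genChoose ((m : ℝ) - α) m * genChoose ((n : ℝ) + α) n : ℝ) : ℂ) *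
      ((x - 1) * ∫ s in (0 : ℝ)..1,
        ((1 + (s : ℂ) * (x - 1)) - x) ^ m * (1 - (1 + (s : ℂ) * (x - 1))) ^ n *
          (1 + (s : ℂ) * (x - 1)) ^ ((α : ℂ) - m - 1)) := by
  have hslit : ∀ s : ℝ, s ∈ Set.Icc (0:ℝ) 1 → (1 + (s:ℂ)*(x-1)) ∈ Complex.slitPlane := by
    intro s hs
    rw [Complex.mem_slitPlane_iff]
    have h := hpath s hs
    by_contra hcon
    push_neg at hcon
    exact h ⟨hcon.2, hcon.1⟩
  have hne : ∀ s : ℝ, s ∈ Set.Icc (0:ℝ) 1 → (1 + (s:ℂ)*(x-1)) ≠ 0 := by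
    intro s hs h0
    have h := hpath s hs
    rw [h0] at h
    simp at h
  have hx1 : (1:ℂ) + ((1:ℝ):ℂ)*(x-1) = x := by push_cast; ring
  have hxslit : x ∈ Complex.slitPlane := hx1 ▸ hslit 1 (by norm_num)
  have hx0 : x ≠ 0 := hx1 ▸ hne 1 (by norm_num)
  set K : ℂ := ((α * genChoose ((m:ℝ)-α) m * genChoose ((n:ℝ)+α) n : ℝ):ℂ) with hK
  set c : ℂ := (α:ℂ) - m with hc
  -- the FTC
  have hderiv : ∀ s ∈ Set.uIcc (0:ℝ) 1,
      HasDerivAt (fun s : ℝ => (1 + (s:ℂ)*(x-1))^c * Hf m n α x (1 + (s:ℂ)*(x-1)))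
        ((K * (x-1)) * (((1 + (s:ℂ)*(x-1)) - x)^m * (1 - (1 + (s:ℂ)*(x-1)))^n *
          (1 + (s:ℂ)*(x-1))^(c - 1))) s := by
    intro s hs
    rw [Set.uIcc_of_le (by norm_num : (0:ℝ) ≤ 1)] at hs
    have hγs : (1 + ((s:ℝ):ℂ)*(x-1)) ∈ Complex.slitPlane := hslit s hs
    have hγ0 : (1 + ((s:ℝ):ℂ)*(x-1)) ≠ 0 := hne s hs
    have hinner : HasDerivAt (fun w : ℂ => 1 + w*(x-1)) (x-1) ((s:ℝ):ℂ) := by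
      simpa using ((hasDerivAt_id (((s:ℝ):ℂ))).mul_const (x-1)).const_add 1
    have h1 : HasDerivAt (fun w : ℂ => (1 + w*(x-1))^c)
        (c * (1 + ((s:ℝ):ℂ)*(x-1))^(c-1) * (x-1)) ((s:ℝ):ℂ) :=
      hinner.cpow_const hγs
    have h2 : HasDerivAt (fun w : ℂ => Hf m n α x (1 + w*(x-1)))
        (Hg m n α x (1 + ((s:ℝ):ℂ)*(x-1)) * (x-1)) ((s:ℝ):ℂ) := by
      have := (Hf_hasDerivAt m n α x (1 + ((s:ℝ):ℂ)*(x-1))).comp ((s:ℝ):ℂ) hinner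
      exact this
    have h3 := (h1.mul h2).comp_ofReal
    convert h3 using 1
    · exact rfl
    set γ : ℂ := 1 + ((s:ℝ):ℂ)*(x-1) with hγ
    have hsplit : γ^c = γ^(c-1) * γ := by
      conv_lhs => rw [show c = (c-1)+1 from by ring]
      rw [Complex.cpow_add _ _ hγ0, Complex.cpow_one]
    have halg := key_alg m n α x γ
    rw [hsplit]
    linear_combination (-(γ^(c-1)*(x-1))) * halg
  have hcont : ContinuousOn
      (fun s : ℝ => (K * (x-1)) * (((1 + (s:ℂ)*(x-1)) - x)^m * (1 - (1 + (s:ℂ)*(x-1)))^n *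
          (1 + (s:ℂ)*(x-1))^(c - 1))) (Set.uIcc (0:ℝ) 1) := by
    rw [Set.uIcc_of_le (by norm_num : (0:ℝ) ≤ 1)]
    have hγcont : Continuous (fun s : ℝ => 1 + (s:ℂ)*(x-1)) := by
      apply Continuous.add continuous_const
      exact (Complex.continuous_ofReal).mul continuous_const
    have h4 : ContinuousOn (fun s:ℝ => (1 + (s:ℂ)*(x-1))^(c-1)) (Set.Icc (0:ℝ) 1) := by
      intro s hs
      have hcp : ContinuousAt (fun z : ℂ => z ^ (c-1)) (1 + (s:ℂ)*(x-1)) :=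
        continuousAt_cpow_const (hslit s hs)
      have := ContinuousAt.comp (x := s) (g := fun z : ℂ => z ^ (c-1))
        (f := fun u : ℝ => 1 + (u:ℂ)*(x-1)) hcp hγcont.continuousAt
      exact this.continuousWithinAt
    apply ContinuousOn.mul continuousOn_const
    apply ContinuousOn.mul _ h4
    apply Continuous.continuousOn
    exact ((hγcont.sub continuous_const).pow m).mul
      ((continuous_const.sub hγcont).pow n)
  have hFTC := intervalIntegral.integral_eq_sub_of_hasDerivAt hderiv
    (hcont.intervalIntegrable)
  rw [intervalIntegral.integral_const_mul] at hFTC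
  -- evaluate endpoints
  have hend1 : (1 + ((1:ℝ):ℂ)*(x-1))^c * Hf m n α x (1 + ((1:ℝ):ℂ)*(x-1))
      = x ^ (α:ℂ) * (∑ ν ∈ Finset.range (n + 1),
        ((genChoose ((m : ℝ) - α) ν * genChoose ((n : ℝ) + α) (n - ν) : ℝ) : ℂ) * x ^ ν) := by
    rw [hx1, Hf_at_x]
    have : x^c * x^(m:ℕ) = x^(α:ℂ) := by
      rw [← Complex.cpow_natCast x m, ← Complex.cpow_add _ _ hx0]
      congr 1
      rw [hc]; ring
    rw [← mul_assoc, this]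
  have hend0 : (1 + ((0:ℝ):ℂ)*(x-1))^c * Hf m n α x (1 + ((0:ℝ):ℂ)*(x-1))
      = ∑ ν ∈ Finset.range (m + 1),
        ((genChoose ((m : ℝ) - α) (m - ν) * genChoose ((n : ℝ) + α) ν : ℝ) : ℂ) * x ^ ν := by
    have h0 : (1:ℂ) + ((0:ℝ):ℂ)*(x-1) = 1 := by push_cast; ring
    rw [h0, Complex.one_cpow, one_mul, Hf_at_one]
  rw [hend1, hend0] at hFTC
  rw [← hFTC]
  rw [show (α:ℂ) - m - 1 = c - 1 from by rw [hc]]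
  ring
end

section
/- Let j = 1 or j = -1, let n and r be positive integers, and set μ_n = Π_{p prime, p | n} p^{1/(p-1)} (a positive real algebraic number). Then for every integer s with 0 ≤ s ≤ r, the real number (μ_n^s / s!) · (Π_{k=r-s+1}^{r} (k·n - j)) · C(2r-s, r) is an algebraic integer (i.e., integral over ℤ). Consequently, all coefficients of the polynomial C(2r,r)·₂F₁(-r, -r+j/n, -2r; n·μ_n·X), whose coefficient of X^s equals (-1)^s·(μ_n^s/s!)·(Π_{k=r-s+1}^{r}(kn-j))·C(2r-s, r), are algebraic integers. -/
open Finset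

lemma count_residue_ge (m : ℕ) (hm : 0 < m) (c : ZMod m) (b s : ℕ) :
    s / m ≤ ((Finset.Ico b (b + s)).filter (fun (k : ℕ) => ((k : ZMod m) = c))).card := by
  haveI : NeZero m := ⟨hm.ne'⟩
  set d := (c - (b : ZMod m)).val with hd
  have hdm : d < m := ZMod.val_lt _
  have hcard := Finset.card_le_card_of_injOn
    (s := Finset.range (s / m))
    (t := (Finset.Ico b (b + s)).filter (fun (k : ℕ) => ((k : ZMod m) = c)))
    (fun t => b + d + t * m) ?_ ?_
  · simpa using hcard
  · intro t ht
    simp only [Finset.coe_range, Set.mem_Iio, Finset.mem_coe, Finset.mem_range] at ht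
    simp only [Finset.mem_coe, Finset.mem_filter, Finset.mem_Ico]
    refine ⟨⟨by omega, ?_⟩, ?_⟩
    · have h1 : (t + 1) * m ≤ (s / m) * m := Nat.mul_le_mul_right _ (by omega)
      have h2 : (s / m) * m ≤ s := Nat.div_mul_le_self s m
      have h3 : d + t * m < (t + 1) * m := by
        have : (t + 1) * m = t * m + m := by ring
        omega
      omega
    · push_cast
      have hdc : ((d : ℕ) : ZMod m) = c - (b : ZMod m) := by
        rw [hd, ZMod.natCast_val, ZMod.cast_id]
      rw [hdc]
      simp
  · intro a _ a' _ h
    simp only at h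
    have : a * m = a' * m := by omega
    exact Nat.eq_of_mul_eq_mul_right hm this

lemma dvd_iff_residue (m n : ℕ) (hco : Nat.Coprime n m) (j : ℤ) (k : ℕ) :
    m ∣ ((k : ℤ) * n - j).natAbs ↔ ((k : ZMod m) = (j : ZMod m) * (n : ZMod m)⁻¹) := by
  have hu : (n : ZMod m) * (n : ZMod m)⁻¹ = 1 :=
    ZMod.mul_inv_of_unit _ ((ZMod.isUnit_iff_coprime n m).mpr hco)
  rw [← Int.natCast_dvd, ← ZMod.intCast_zmod_eq_zero_iff_dvd]
  push_cast
  constructor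
  · intro h
    have h' : (k : ZMod m) * n = j := by linear_combination h
    calc (k : ZMod m) = (k : ZMod m) * ((n : ZMod m) * (n : ZMod m)⁻¹) := by rw [hu, mul_one]
      _ = ((k : ZMod m) * n) * (n : ZMod m)⁻¹ := by ring
      _ = (j : ZMod m) * (n : ZMod m)⁻¹ := by rw [h']
  · intro h
    rw [h]
    calc (j : ZMod m) * (n : ZMod m)⁻¹ * n - j
        = (j : ZMod m) * ((n : ZMod m) * (n : ZMod m)⁻¹) - j := by ring
      _ = 0 := by rw [hu]; ring

lemma legendre_eq (q s : ℕ) (hq : q.Prime) :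
    (Nat.factorial s).factorization q = ∑ i ∈ Finset.Ico 1 (s + 1), s / q ^ i := by
  have hlog : Nat.log q s < s + 1 := Nat.lt_succ_of_le (Nat.log_le_self q s)
  have hfne : Nat.factorial s ≠ 0 := Nat.factorial_ne_zero s
  apply le_antisymm
  · rw [← Nat.Prime.pow_dvd_factorial_iff hq hlog]
    exact Nat.ordProj_dvd _ _
  · rw [← Nat.Prime.pow_dvd_iff_le_factorization hq hfne,
      Nat.Prime.pow_dvd_factorial_iff hq hlog]

lemma legendre_le_div_pred (q s : ℕ) (hq : q.Prime) :
    (Nat.factorial s).factorization q ≤ s / (q - 1) := by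
  rw [legendre_eq q s hq]
  exact Nat.geom_sum_Ico_le hq.two_le _ _

lemma key_factorization_le (q n : ℕ) (hq : q.Prime) (hqn : ¬ q ∣ n) (j : ℤ) (b s : ℕ)
    (hT : ∀ k ∈ Finset.Ico b (b + s), ((k : ℤ) * n - j).natAbs ≠ 0) :
    (Nat.factorial s).factorization q ≤
      (∏ k ∈ Finset.Ico b (b + s), ((k : ℤ) * n - j).natAbs).factorization q := by
  have hco : ∀ i : ℕ, Nat.Coprime n (q ^ i) := fun i =>
    Nat.Coprime.pow_right i ((hq.coprime_iff_not_dvd.mpr hqn).symm)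
  have hqpos : ∀ i : ℕ, 0 < q ^ i := fun i => Nat.pow_pos hq.pos
  rw [legendre_eq q s hq, Nat.factorization_prod hT]
  rw [Finsupp.finset_sum_apply]
  calc ∑ i ∈ Finset.Ico 1 (s + 1), s / q ^ i
      ≤ ∑ i ∈ Finset.Ico 1 (s + 1),
          ((Finset.Ico b (b + s)).filter
            (fun (k : ℕ) => q ^ i ∣ ((k : ℤ) * n - j).natAbs)).card := by
        apply Finset.sum_le_sum
        intro i _
        have h1 := count_residue_ge (q ^ i) (hqpos i)
          ((j : ZMod (q ^ i)) * ((n : ZMod (q ^ i)))⁻¹) b s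
        have h2 : ((Finset.Ico b (b + s)).filter
            (fun (k : ℕ) => ((k : ZMod (q ^ i)) = (j : ZMod (q ^ i)) * ((n : ZMod (q ^ i)))⁻¹))) =
            ((Finset.Ico b (b + s)).filter
            (fun (k : ℕ) => q ^ i ∣ ((k : ℤ) * n - j).natAbs)) := by
          apply Finset.filter_congr
          intro k _
          exact (dvd_iff_residue (q ^ i) n (hco i) j k).symm
        rw [h2] at h1
        exact h1
    _ = ∑ i ∈ Finset.Ico 1 (s + 1), ∑ k ∈ Finset.Ico b (b + s),
          (if q ^ i ∣ ((k : ℤ) * n - j).natAbs then 1 else 0) := by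
        refine Finset.sum_congr rfl fun i _ => ?_
        rw [Finset.card_filter]
    _ = ∑ k ∈ Finset.Ico b (b + s), ∑ i ∈ Finset.Ico 1 (s + 1),
          (if q ^ i ∣ ((k : ℤ) * n - j).natAbs then 1 else 0) := Finset.sum_comm
    _ = ∑ k ∈ Finset.Ico b (b + s),
          ((Finset.Ico 1 (s + 1)).filter
            (fun i => q ^ i ∣ ((k : ℤ) * n - j).natAbs)).card := by
        refine Finset.sum_congr rfl fun k _ => ?_
        rw [Finset.card_filter]
    _ ≤ ∑ k ∈ Finset.Ico b (b + s), (((k : ℤ) * n - j).natAbs).factorization q := by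
        apply Finset.sum_le_sum
        intro k hk
        have hsub : ((Finset.Ico 1 (s + 1)).filter
            (fun i => q ^ i ∣ ((k : ℤ) * n - j).natAbs)) ⊆
            Finset.Icc 1 ((((k : ℤ) * n - j).natAbs).factorization q) := by
          intro i hi
          simp only [Finset.mem_filter, Finset.mem_Ico] at hi
          simp only [Finset.mem_Icc]
          exact ⟨hi.1.1, (Nat.Prime.pow_dvd_iff_le_factorization hq (hT k hk)).mp hi.2⟩
        calc _ ≤ (Finset.Icc 1 ((((k : ℤ) * n - j).natAbs).factorization q)).card :=
              Finset.card_le_card hsub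
          _ = _ := by rw [Nat.card_Icc]; omega

lemma main_dvd (n : ℕ) (hn : 0 < n) (j : ℤ) (b s : ℕ)
    (hP : (∏ k ∈ Finset.Ico b (b + s), ((k : ℤ) * n - j).natAbs) ≠ 0) :
    (Nat.factorial s) ^ (∏ p ∈ n.primeFactors, (p - 1)) ∣
      (∏ p ∈ n.primeFactors, p ^ (s * ((∏ p' ∈ n.primeFactors, (p' - 1)) / (p - 1)))) *
      (∏ k ∈ Finset.Ico b (b + s), ((k : ℤ) * n - j).natAbs) ^
        (∏ p ∈ n.primeFactors, (p - 1)) := by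
  set L := ∏ p ∈ n.primeFactors, (p - 1) with hL
  set N := ∏ p ∈ n.primeFactors, p ^ (s * (L / (p - 1))) with hN
  set P := ∏ k ∈ Finset.Ico b (b + s), ((k : ℤ) * n - j).natAbs with hPdef
  have hN0 : N ≠ 0 := by
    rw [hN]
    apply Finset.prod_ne_zero_iff.mpr
    intro p hp
    exact pow_ne_zero _ (Nat.Prime.ne_zero (Nat.prime_of_mem_primeFactors hp))
  have hF0 : Nat.factorial s ≠ 0 := Nat.factorial_ne_zero s
  have hLHS : (Nat.factorial s) ^ L ≠ 0 := pow_ne_zero _ hF0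
  have hRHS : N * P ^ L ≠ 0 := mul_ne_zero hN0 (pow_ne_zero _ hP)
  rw [← Nat.factorization_le_iff_dvd hLHS hRHS]
  intro q
  by_cases hqp : q.Prime
  · have hfl : ((Nat.factorial s ^ L).factorization) q =
        L * (Nat.factorial s).factorization q := by
      rw [Nat.factorization_pow]; simp
    have hfr : ((N * P ^ L).factorization) q =
        N.factorization q + L * P.factorization q := by
      rw [Nat.factorization_mul hN0 (pow_ne_zero _ hP), Nat.factorization_pow]; simp
    rw [hfl, hfr]
    by_cases hq : q ∣ n
    · have hqmem : q ∈ n.primeFactors := Nat.mem_primeFactors.mpr ⟨hqp, hq, hn.ne'⟩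
      have hdvdN : q ^ (s * (L / (q - 1))) ∣ N := by
        rw [hN]
        exact Finset.dvd_prod_of_mem _ hqmem
      have h1 : s * (L / (q - 1)) ≤ N.factorization q :=
        (Nat.Prime.pow_dvd_iff_le_factorization hqp hN0).mp hdvdN
      have hdvdL : (q - 1) ∣ L := by
        rw [hL]
        exact Finset.dvd_prod_of_mem _ hqmem
      obtain ⟨a, ha⟩ := hdvdL
      have haq : L / (q - 1) = a := by
        rw [ha]
        exact Nat.mul_div_cancel_left a (by have := hqp.two_le; omega)
      have hv : (Nat.factorial s).factorization q ≤ s / (q - 1) :=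
        legendre_le_div_pred q s hqp
      have h2 : L * (Nat.factorial s).factorization q ≤ s * (L / (q - 1)) := by
        rw [haq, ha]
        calc (q - 1) * a * (Nat.factorial s).factorization q
            ≤ (q - 1) * a * (s / (q - 1)) := Nat.mul_le_mul_left _ hv
          _ = a * ((s / (q - 1)) * (q - 1)) := by ring
          _ ≤ a * s := Nat.mul_le_mul_left _ (Nat.div_mul_le_self s (q - 1))
          _ = s * a := by ring
      omega
    · have hT : ∀ k ∈ Finset.Ico b (b + s), ((k : ℤ) * n - j).natAbs ≠ 0 := by
        rw [hPdef] at hP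
        exact fun k hk => Finset.prod_ne_zero_iff.mp hP k hk
      have := key_factorization_le q n hqp hq j b s hT
      have h3 : L * (Nat.factorial s).factorization q ≤ L * P.factorization q :=
        Nat.mul_le_mul_left _ this
      omega
  · rw [Nat.factorization_eq_zero_of_not_prime _ hqp]
    exact Nat.zero_le _

lemma mu_pow_eq (n : ℕ) :
    (∏ p ∈ n.primeFactors, (p : ℝ) ^ ((1 : ℝ) / ((p : ℝ) - 1))) ^
        (∏ p ∈ n.primeFactors, (p - 1)) =
      ((∏ p ∈ n.primeFactors, p ^ ((∏ p' ∈ n.primeFactors, (p' - 1)) / (p - 1)) : ℕ) : ℝ) := by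
  set L := ∏ p ∈ n.primeFactors, (p - 1) with hL
  rw [← Finset.prod_pow]
  push_cast
  apply Finset.prod_congr rfl
  intro p hp
  have hpp : p.Prime := Nat.prime_of_mem_primeFactors hp
  have hp2 : 2 ≤ p := hpp.two_le
  have hp0 : (0 : ℝ) ≤ (p : ℝ) := by positivity
  have hcast : (p : ℝ) - 1 = ((p - 1 : ℕ) : ℝ) := by
    push_cast [Nat.cast_sub (by omega : 1 ≤ p)]
    ring
  have hdvdL : (p - 1) ∣ L := Finset.dvd_prod_of_mem _ hp
  have hpm1 : (0 : ℝ) < ((p - 1 : ℕ) : ℝ) := by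
    have : 1 ≤ p - 1 := by omega
    exact_mod_cast Nat.lt_of_lt_of_le Nat.zero_lt_one this
  calc ((p : ℝ) ^ ((1 : ℝ) / ((p : ℝ) - 1))) ^ L
      = ((p : ℝ) ^ ((1 : ℝ) / ((p : ℝ) - 1))) ^ ((L : ℕ) : ℝ) := by
        rw [Real.rpow_natCast]
    _ = (p : ℝ) ^ (((1 : ℝ) / ((p : ℝ) - 1)) * L) := by
        rw [← Real.rpow_mul hp0]
    _ = (p : ℝ) ^ (((L / (p - 1) : ℕ) : ℝ)) := by
        congr 1
        rw [hcast]
        rw [div_mul_eq_mul_div, one_mul, eq_comm, eq_div_iff (ne_of_gt hpm1)]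
        rw [← Nat.cast_mul, Nat.div_mul_cancel hdvdL]
    _ = (p : ℝ) ^ (L / (p - 1) : ℕ) := Real.rpow_natCast _ _

theorem hypergeometric_coefficients_algebraic_integers (j : ℤ) (hj : j = 1 ∨ j = -1)
    (n r : ℕ) (hn : 0 < n) (hr : 0 < r) (μ : ℝ)
    (hμ : μ = ∏ p ∈ n.primeFactors, (p : ℝ) ^ ((1 : ℝ) / ((p : ℝ) - 1))) :
    ∀ s : ℕ, s ≤ r →
      IsIntegral ℤ ((μ ^ s / (Nat.factorial s : ℝ)) *
        (∏ k ∈ Finset.Icc (r - s + 1) r, ((k : ℝ) * (n : ℝ) - (j : ℝ))) *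
        (Nat.choose (2 * r - s) r : ℝ)) ∧
      IsIntegral ℤ ((-1 : ℝ) ^ s * (μ ^ s / (Nat.factorial s : ℝ)) *
        (∏ k ∈ Finset.Icc (r - s + 1) r, ((k : ℝ) * (n : ℝ) - (j : ℝ))) *
        (Nat.choose (2 * r - s) r : ℝ)) := by
  intro s hs
  have hneg1 : IsIntegral ℤ ((-1 : ℝ) ^ s) := by
    apply IsIntegral.pow
    simpa using isIntegral_algebraMap (R := ℤ) (A := ℝ) (x := -1)
  set b := r - s + 1 with hb
  have hIcc : Finset.Icc (r - s + 1) r = Finset.Ico b (b + s) := by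
    rw [hb]
    have : r - s + 1 + s = r + 1 := by omega
    rw [this, Finset.Ico_add_one_right_eq_Icc]
  set L := ∏ p ∈ n.primeFactors, (p - 1) with hL
  set N := ∏ p ∈ n.primeFactors, p ^ (s * (L / (p - 1))) with hN
  set Q := ∏ p ∈ n.primeFactors, p ^ (L / (p - 1)) with hQ
  set P := ∏ k ∈ Finset.Ico b (b + s), ((k : ℤ) * n - j).natAbs with hPdef
  set C := Nat.choose (2 * r - s) r with hC
  have hL0 : L ≠ 0 := by
    rw [hL]
    apply Finset.prod_ne_zero_iff.mpr
    intro p hp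
    have := (Nat.prime_of_mem_primeFactors hp).two_le
    omega
  by_cases hP : P = 0
  · -- the real product has a zero factor
    rw [hPdef] at hP
    obtain ⟨k, hk, hk0⟩ := Finset.prod_eq_zero_iff.mp hP
    have hz : ((k : ℤ) * n - j) = 0 := by
      have := Int.natAbs_eq_zero.mp hk0
      exact this
    have hzero : (∏ k ∈ Finset.Icc (r - s + 1) r, ((k : ℝ) * (n : ℝ) - (j : ℝ))) = 0 := by
      rw [hIcc]
      apply Finset.prod_eq_zero hk
      have : (((k : ℤ) * n - j : ℤ) : ℝ) = 0 := by exact_mod_cast congrArg (Int.cast : ℤ → ℝ) hz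
      push_cast at this ⊢
      linarith
    rw [hzero]
    constructor
    · simpa using isIntegral_zero
    · simpa using isIntegral_zero
  · -- the main case
    have hF0 : (Nat.factorial s : ℝ) ≠ 0 := by
      exact_mod_cast Nat.factorial_ne_zero s
    -- the real product equals (P : ℝ)
    have hprod : (∏ k ∈ Finset.Icc (r - s + 1) r, ((k : ℝ) * (n : ℝ) - (j : ℝ))) = (P : ℝ) := by
      rw [hIcc, hPdef]
      push_cast
      apply Finset.prod_congr rfl
      intro k hk
      simp only [Finset.mem_Ico] at hk
      have hk1 : 1 ≤ k := by omega
      have hnonneg : 0 ≤ (k : ℤ) * n - j := by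
        have h1 : (1 : ℤ) ≤ (k : ℤ) * n := by
          have : (1 : ℤ) ≤ (k : ℤ) := by exact_mod_cast hk1
          have : (1 : ℤ) ≤ (n : ℤ) := by exact_mod_cast hn
          nlinarith [show (1:ℤ) ≤ (k:ℤ) from by exact_mod_cast hk1]
        rcases hj with h | h <;> omega
      rw [Nat.cast_natAbs, abs_of_nonneg hnonneg]
      push_cast
      ring
    have hdvd : (Nat.factorial s) ^ L ∣ N * (P * C) ^ L := by
      have h1 := main_dvd n hn j b s (by rw [hPdef] at hP; exact hP)
      rw [← hL, ← hN, ← hPdef] at h1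
      calc (Nat.factorial s) ^ L ∣ N * P ^ L := h1
        _ ∣ N * (P * C) ^ L := by
            rw [mul_pow]
            rw [← mul_assoc]
            exact Dvd.dvd.mul_right dvd_rfl _
    set m : ℕ := (N * (P * C) ^ L) / (Nat.factorial s) ^ L with hm
    have hQs : Q ^ s = N := by
      rw [hQ, hN, ← Finset.prod_pow]
      apply Finset.prod_congr rfl
      intro p _
      rw [← pow_mul, mul_comm]
    have hmuL : μ ^ L = (Q : ℝ) := by
      rw [hμ, hL, hQ]
      exact mu_pow_eq n
    set y : ℝ := (μ ^ s / (Nat.factorial s : ℝ)) * (P : ℝ) * (C : ℝ) with hy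
    have hyL : y ^ L = (m : ℝ) := by
      have hcastdiv : ((m : ℕ) : ℝ) =
          ((N * (P * C) ^ L : ℕ) : ℝ) / (((Nat.factorial s) ^ L : ℕ) : ℝ) := by
        rw [hm]
        rw [Nat.cast_div hdvd (by exact_mod_cast pow_ne_zero _ (Nat.factorial_ne_zero s))]
      rw [hcastdiv]
      push_cast
      rw [hy]
      field_simp
      rw [div_pow, div_mul_cancel₀ _ (pow_ne_zero _ hF0)]
      calc (μ ^ s * (P : ℝ) * (C : ℝ)) ^ L
          = (μ ^ s) ^ L * ((P : ℝ) * (C : ℝ)) ^ L := by ring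
        _ = (N : ℝ) * ((P : ℝ) * (C : ℝ)) ^ L := by
            rw [← pow_mul, mul_comm s L, pow_mul, hmuL, ← Nat.cast_pow, hQs]
    have hyint : IsIntegral ℤ y := by
      refine ⟨Polynomial.X ^ L - Polynomial.C (m : ℤ), Polynomial.monic_X_pow_sub_C _ hL0, ?_⟩
      simp only [Polynomial.eval₂_sub, Polynomial.eval₂_pow, Polynomial.eval₂_X,
        Polynomial.eval₂_C]
      rw [hyL]
      simp
    constructor
    · rw [hprod]
      exact hyint
    · rw [hprod]
      have heq : (-1 : ℝ) ^ s * (μ ^ s / (Nat.factorial s : ℝ)) * (P : ℝ) * (C : ℝ) =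
          (-1 : ℝ) ^ s * y := by
        rw [hy]; ring
      rw [heq]
      exact hneg1.mul hyint
end

section
/- Let n and r be positive integers, let 0 < φ < π, put w = e^{iφ} and √w = e^{iφ/2}, and define R_{n,r}(x) = (Γ(r+1+1/n)/(r!·Γ(1/n)))·∫₁^x (1-t)^r·(t-x)^r·t^{-(r+1-1/n)} dt, where the integration path is the straight line from 1 to x and t^{-(r+1-1/n)} is the principal branch. Then |R_{n,r}(w)| ≤ (Γ(r+1+1/n)/(r!·Γ(1/n)))·φ·|1-√w|^{2r}. -/
/-- The point `1 + s(x-1)` on the straight segment from `1` to `x`. -/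
noncomputable def seg (x : ℂ) (s : ℝ) : ℂ := 1 + (s : ℂ) * (x - 1)

/-- `R_{n,r}(x) = Γ(r+1+1/n)/(r!·Γ(1/n)) · ∫₁ˣ (1-t)^r (t-x)^r t^{-(r+1-1/n)} dt`,
the integral being taken along the straight line from `1` to `x`
(principal branch of the complex power). -/
noncomputable def Rnr (n r : ℕ) (x : ℂ) : ℂ :=
  ((Real.Gamma ((r : ℝ) + 1 + 1 / (n : ℝ)) /
      ((Nat.factorial r : ℝ) * Real.Gamma (1 / (n : ℝ)))) : ℝ) *
    ((x - 1) * ∫ s in (0 : ℝ)..1,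
      (1 - seg x s) ^ r * (seg x s - x) ^ r *
        (seg x s) ^ (-((r : ℂ) + 1 - 1 / (n : ℂ))))

open Complex Polynomial intervalIntegral

/-- Every function of the form `Q(t)·t^(-c)` with `Q` a polynomial has a primitive
on the slit plane. -/
lemma exists_prim (c : ℂ) (Q : ℂ[X]) :
    ∃ F : ℂ → ℂ, ∀ t ∈ Complex.slitPlane, HasDerivAt F (Q.eval t * t ^ (-c)) t := by
  induction Q using Polynomial.induction_on' with
  | add p q hp hq =>
    obtain ⟨F, hF⟩ := hp
    obtain ⟨G, hG⟩ := hq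
    exact ⟨F + G, fun t ht => by simpa [add_mul] using (hF t ht).add (hG t ht)⟩
  | monomial m a =>
    have key : ∀ t ∈ Complex.slitPlane, t ^ ((m : ℂ) - c) = t ^ m * t ^ (-c) := by
      intro t ht
      rw [sub_eq_add_neg, Complex.cpow_add _ _ (Complex.slitPlane_ne_zero ht),
        Complex.cpow_natCast]
    by_cases h : (m : ℂ) - c + 1 = 0
    · refine ⟨fun t => a * Complex.log t, fun t ht => ?_⟩
      have hmc : (m : ℂ) - c = -1 := by linear_combination h
      have hd := (Complex.hasDerivAt_log ht).const_mul a
      have : a * t⁻¹ = (Polynomial.monomial m a).eval t * t ^ (-c) := by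
        rw [Polynomial.eval_monomial, mul_assoc, ← key t ht, hmc, Complex.cpow_neg_one]
      rwa [this] at hd
    · refine ⟨fun t => a / ((m : ℂ) - c + 1) * t ^ ((m : ℂ) - c + 1), fun t ht => ?_⟩
      have hd := ((Complex.hasStrictDerivAt_cpow_const
        (c := (m : ℂ) - c + 1) ht).hasDerivAt).const_mul (a / ((m : ℂ) - c + 1))
      have : a / ((m : ℂ) - c + 1) * (((m : ℂ) - c + 1) * t ^ ((m : ℂ) - c + 1 - 1)) =
          (Polynomial.monomial m a).eval t * t ^ (-c) := by
        rw [Polynomial.eval_monomial, mul_assoc, ← key t ht]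
        field_simp
        ring_nf
      rwa [this] at hd

/-- `|1 - e^{iα}| = √(2 - 2 cos α)`. -/
lemma abs_one_sub_exp (α : ℝ) :
    ‖1 - Complex.exp (α * Complex.I)‖ = Real.sqrt (2 - 2 * Real.cos α) := by
  rw [Complex.norm_def, Complex.normSq_apply]
  congr 1
  simp only [Complex.sub_re, Complex.sub_im, Complex.one_re, Complex.one_im,
    Complex.exp_ofReal_mul_I_re, Complex.exp_ofReal_mul_I_im]
  nlinarith [Real.sin_sq_add_cos_sq α]

lemma trig_core {a b : ℝ} (ha : 0 ≤ Real.sin a) (hb : 0 ≤ Real.sin b) :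
    (2 - 2 * Real.cos (2 * a)) * (2 - 2 * Real.cos (2 * b)) ≤
      (2 - 2 * Real.cos (a + b)) ^ 2 := by
  have h2a : Real.cos (2 * a) = 1 - 2 * Real.sin a ^ 2 := by
    rw [Real.cos_two_mul]; nlinarith [Real.sin_sq_add_cos_sq a]
  have h2b : Real.cos (2 * b) = 1 - 2 * Real.sin b ^ 2 := by
    rw [Real.cos_two_mul]; nlinarith [Real.sin_sq_add_cos_sq b]
  have hab : 2 * Real.sin a * Real.sin b ≤ 1 - Real.cos (a + b) := by
    rw [Real.cos_add]
    have := Real.cos_le_one (a - b)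
    rw [Real.cos_sub] at this
    linarith
  rw [h2a, h2b]
  nlinarith [mul_nonneg ha hb, mul_nonneg (mul_nonneg ha hb) (mul_nonneg ha hb)]

/-- The key geometric estimate on the arc: for `0 ≤ θ ≤ φ < π`,
`|1-e^{iθ}|·|e^{iθ}-e^{iφ}| ≤ |1-e^{iφ/2}|²`. -/
lemma arc_bound {φ θ : ℝ} (hθ0 : 0 ≤ θ) (hθφ : θ ≤ φ) (hφπ : φ < Real.pi) :
    ‖1 - Complex.exp (θ * Complex.I)‖ *
      ‖Complex.exp (θ * Complex.I) - Complex.exp (φ * Complex.I)‖ ≤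
      ‖1 - Complex.exp ((φ / 2 : ℝ) * Complex.I)‖ ^ 2 := by
  have hsplit : Complex.exp (θ * Complex.I) - Complex.exp (φ * Complex.I) =
      Complex.exp (θ * Complex.I) * (1 - Complex.exp (((φ - θ : ℝ) : ℂ) * Complex.I)) := by
    rw [mul_sub, mul_one, ← Complex.exp_add]
    push_cast
    ring_nf
  rw [hsplit, norm_mul, Complex.norm_exp_ofReal_mul_I, one_mul]
  rw [abs_one_sub_exp, abs_one_sub_exp, abs_one_sub_exp]
  have hc2 : 0 ≤ 2 - 2 * Real.cos (φ / 2) := by nlinarith [Real.cos_le_one (φ / 2)]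
  have hcθ : 0 ≤ 2 - 2 * Real.cos θ := by nlinarith [Real.cos_le_one θ]
  rw [Real.sq_sqrt hc2, ← Real.sqrt_mul hcθ]
  have hkey : (2 - 2 * Real.cos θ) * (2 - 2 * Real.cos (φ - θ)) ≤
      (2 - 2 * Real.cos (φ / 2)) ^ 2 := by
    have h := trig_core (a := θ / 2) (b := (φ - θ) / 2)
      (Real.sin_nonneg_of_nonneg_of_le_pi (by linarith) (by linarith [Real.pi_pos]))
      (Real.sin_nonneg_of_nonneg_of_le_pi (by linarith) (by linarith [Real.pi_pos]))
    rw [show 2 * (θ / 2) = θ by ring, show 2 * ((φ - θ) / 2) = φ - θ by ring,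
      show θ / 2 + (φ - θ) / 2 = φ / 2 by ring] at h
    exact h
  calc Real.sqrt ((2 - 2 * Real.cos θ) * (2 - 2 * Real.cos (φ - θ)))
      ≤ Real.sqrt ((2 - 2 * Real.cos (φ / 2)) ^ 2) := Real.sqrt_le_sqrt hkey
    _ = 2 - 2 * Real.cos (φ / 2) := by rw [Real.sqrt_sq hc2]

theorem remainder_integral_bound (n r : ℕ) (hn : 0 < n) (hr : 0 < r)
    (φ : ℝ) (hφ0 : 0 < φ) (hφπ : φ < Real.pi) :
    ‖Rnr n r (Complex.exp ((φ : ℂ) * Complex.I))‖ ≤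
      Real.Gamma ((r : ℝ) + 1 + 1 / (n : ℝ)) /
          ((Nat.factorial r : ℝ) * Real.Gamma (1 / (n : ℝ))) * φ *
        ‖1 - Complex.exp (((φ / 2 : ℝ) : ℂ) * Complex.I)‖ ^ (2 * r) := by
  have hπ := Real.pi_pos
  set c : ℂ := (r : ℂ) + 1 - 1 / (n : ℂ) with hc
  set w : ℂ := Complex.exp ((φ : ℂ) * Complex.I) with hw
  set C0 : ℝ := Real.Gamma ((r : ℝ) + 1 + 1 / (n : ℝ)) /
      ((Nat.factorial r : ℝ) * Real.Gamma (1 / (n : ℝ))) with hC0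
  set D : ℝ := ‖1 - Complex.exp (((φ / 2 : ℝ) : ℂ) * Complex.I)‖ with hD
  have hsinφ : 0 < Real.sin φ := Real.sin_pos_of_pos_of_lt_pi hφ0 hφπ
  -- the integrand as a function of a complex variable
  set fC : ℂ → ℂ := fun t => (1 - t) ^ r * (t - w) ^ r * t ^ (-c) with hfC
  -- membership facts
  have hwim : w.im = Real.sin φ := Complex.exp_ofReal_mul_I_im φ
  have hseg : ∀ s : ℝ, s ∈ Set.uIcc (0 : ℝ) 1 → seg w s ∈ Complex.slitPlane := by
    intro s hs
    rw [Set.uIcc_of_le (by norm_num : (0:ℝ) ≤ 1)] at hs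
    have him : (seg w s).im = s * Real.sin φ := by
      simp [seg, Complex.add_im, Complex.mul_im, hwim]
    rcases eq_or_lt_of_le hs.1 with h0 | h0
    · rw [Complex.mem_slitPlane_iff]
      left
      simp [seg, ← h0]
    · rw [Complex.mem_slitPlane_iff]
      right
      rw [him]
      positivity
  have harcmem : ∀ θ : ℝ, θ ∈ Set.uIcc (0 : ℝ) φ →
      Complex.exp ((θ : ℂ) * Complex.I) ∈ Complex.slitPlane := by
    intro θ hθ
    rw [Set.uIcc_of_le hφ0.le] at hθ
    rw [Complex.mem_slitPlane_iff]
    rcases eq_or_lt_of_le hθ.1 with h0 | h0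
    · left
      rw [Complex.exp_ofReal_mul_I_re, ← h0]
      simp
    · right
      rw [Complex.exp_ofReal_mul_I_im]
      exact (Real.sin_pos_of_pos_of_lt_pi h0 (lt_of_le_of_lt hθ.2 hφπ)).ne'
  -- the primitive
  obtain ⟨F, hF0⟩ := exists_prim c ((1 - Polynomial.X) ^ r * (Polynomial.X - Polynomial.C w) ^ r)
  have hF : ∀ t ∈ Complex.slitPlane, HasDerivAt F (fC t) t := by
    intro t ht
    have := hF0 t ht
    simpa [hfC] using this
  -- continuity of fC on the slit plane
  have hfcont : ∀ t ∈ Complex.slitPlane, ContinuousAt fC t := by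
    intro t ht
    exact (((continuous_const.sub continuous_id).pow r).continuousAt.mul
      ((continuous_id.sub continuous_const).pow r).continuousAt).mul
      (continuousAt_cpow_const ht)
  -- FTC along the chord
  have hsegcont : Continuous (fun s : ℝ => seg w s) := by
    unfold seg; fun_prop
  have hchord : ∫ s in (0:ℝ)..1, fC (seg w s) * (w - 1) = F w - F 1 := by
    have hchain : ∀ s ∈ Set.uIcc (0:ℝ) 1,
        HasDerivAt (fun u : ℝ => F (seg w u)) (fC (seg w s) * (w - 1)) s := by
      intro s hs
      have hin : HasDerivAt (fun z : ℂ => 1 + z * (w - 1)) (w - 1) (s : ℂ) := by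
        simpa using ((hasDerivAt_id (s : ℂ)).mul_const (w - 1)).const_add 1
      have hcomp := (hF _ (hseg s hs)).comp (s : ℂ) hin
      exact hcomp.comp_ofReal
    have hint : IntervalIntegrable (fun s : ℝ => fC (seg w s) * (w - 1))
        MeasureTheory.volume 0 1 := by
      apply ContinuousOn.intervalIntegrable
      intro s hs
      exact (((hfcont _ (hseg s hs)).comp hsegcont.continuousAt).mul
        continuousAt_const).continuousWithinAt
    have := intervalIntegral.integral_eq_sub_of_hasDerivAt hchain hint
    have h1 : seg w 1 = w := by simp [seg]
    have h0 : seg w 0 = 1 := by simp [seg]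
    rw [h1, h0] at this
    exact this
  -- FTC along the arc
  have harc : ∫ θ in (0:ℝ)..φ,
      fC (Complex.exp ((θ : ℂ) * Complex.I)) * (Complex.exp ((θ : ℂ) * Complex.I) * Complex.I)
      = F w - F 1 := by
    have hchain : ∀ θ ∈ Set.uIcc (0:ℝ) φ,
        HasDerivAt (fun u : ℝ => F (Complex.exp ((u : ℂ) * Complex.I)))
          (fC (Complex.exp ((θ : ℂ) * Complex.I)) *
            (Complex.exp ((θ : ℂ) * Complex.I) * Complex.I)) θ := by
      intro θ hθ
      have hin : HasDerivAt (fun z : ℂ => Complex.exp (z * Complex.I))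
          (Complex.exp ((θ : ℂ) * Complex.I) * Complex.I) (θ : ℂ) := by
        simpa using ((hasDerivAt_id (θ : ℂ)).mul_const Complex.I).cexp
      have hcomp := (hF _ (harcmem θ hθ)).comp (θ : ℂ) hin
      exact hcomp.comp_ofReal
    have hint : IntervalIntegrable (fun θ : ℝ =>
        fC (Complex.exp ((θ : ℂ) * Complex.I)) *
          (Complex.exp ((θ : ℂ) * Complex.I) * Complex.I)) MeasureTheory.volume 0 φ := by
      apply ContinuousOn.intervalIntegrable
      intro θ hθ
      have hec : Continuous (fun u : ℝ => Complex.exp ((u : ℂ) * Complex.I)) := by fun_prop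
      have h1 : ContinuousAt (fun u : ℝ => fC (Complex.exp ((u : ℂ) * Complex.I))) θ :=
        ContinuousAt.comp (f := fun u : ℝ => Complex.exp ((u : ℂ) * Complex.I)) (hfcont _ (harcmem θ hθ)) hec.continuousAt
      exact (h1.mul (hec.continuousAt.mul continuousAt_const)).continuousWithinAt
    have := intervalIntegral.integral_eq_sub_of_hasDerivAt hchain hint
    rw [this]
    simp [hw]
  -- pointwise bound on the arc
  have hbound : ∀ θ ∈ Set.uIcc (0:ℝ) φ,
      ‖fC (Complex.exp ((θ : ℂ) * Complex.I)) *
        (Complex.exp ((θ : ℂ) * Complex.I) * Complex.I)‖ ≤ D ^ (2 * r) := by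
    intro θ hθ
    rw [Set.uIcc_of_le hφ0.le] at hθ
    set t : ℂ := Complex.exp ((θ : ℂ) * Complex.I) with ht
    have htabs : ‖t‖ = 1 := Complex.norm_exp_ofReal_mul_I θ
    have hcp : ‖t ^ (-c)‖ = 1 := by
      have hcr : -c = (((-((r : ℝ) + 1 - 1 / (n : ℝ))) : ℝ) : ℂ) := by
        rw [hc]; push_cast; ring
      rw [hcr, Complex.norm_cpow_real, htabs, Real.one_rpow]
    have hDnn : 0 ≤ D := norm_nonneg _
    calc ‖fC t * (t * Complex.I)‖
        = ‖1 - t‖ ^ r * ‖t - w‖ ^ r *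
            ‖t ^ (-c)‖ * (‖t‖ * ‖Complex.I‖) := by
          simp [hfC, norm_mul, norm_pow, mul_assoc]
      _ = (‖1 - t‖ * ‖t - w‖) ^ r := by
          rw [hcp, htabs, Complex.norm_I, mul_pow]; ring
      _ ≤ (D ^ 2) ^ r := by
          apply pow_le_pow_left₀ (by positivity)
          rw [hD]
          exact arc_bound hθ.1 hθ.2 hφπ
      _ = D ^ (2 * r) := by rw [← pow_mul]
  -- assemble
  have hC0 : 0 < C0 := by
    have h1n : 0 < 1 / (n : ℝ) := by
      have : (0:ℝ) < n := Nat.cast_pos.mpr hn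
      positivity
    have hg1 : 0 < Real.Gamma ((r : ℝ) + 1 + 1 / (n : ℝ)) :=
      Real.Gamma_pos_of_pos (by positivity)
    have hg2 : 0 < Real.Gamma (1 / (n : ℝ)) := Real.Gamma_pos_of_pos h1n
    have hfac : (0:ℝ) < Nat.factorial r := by positivity
    exact div_pos hg1 (by positivity)
  have hRnr : Rnr n r w = (C0 : ℂ) *
      ((w - 1) * ∫ s in (0:ℝ)..1, fC (seg w s)) := by
    rw [Rnr]
  have hmain : (w - 1) * (∫ s in (0:ℝ)..1, fC (seg w s)) =
      ∫ θ in (0:ℝ)..φ, fC (Complex.exp ((θ : ℂ) * Complex.I)) *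
        (Complex.exp ((θ : ℂ) * Complex.I) * Complex.I) := by
    rw [harc, ← hchord, intervalIntegral.integral_mul_const]
    ring
  have hnormint : ‖∫ θ in (0:ℝ)..φ, fC (Complex.exp ((θ : ℂ) * Complex.I)) *
      (Complex.exp ((θ : ℂ) * Complex.I) * Complex.I)‖ ≤ D ^ (2 * r) * |φ - 0| := by
    apply intervalIntegral.norm_integral_le_of_norm_le_const
    intro θ hθ
    exact hbound θ (Set.uIoc_subset_uIcc hθ)
  rw [sub_zero, abs_of_pos hφ0] at hnormint
  calc ‖Rnr n r w‖
      = C0 * ‖(w - 1) * ∫ s in (0:ℝ)..1, fC (seg w s)‖ := by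
        rw [hRnr, norm_mul, Complex.norm_real, Real.norm_eq_abs, abs_of_pos hC0]
    _ = C0 * ‖∫ θ in (0:ℝ)..φ, fC (Complex.exp ((θ : ℂ) * Complex.I)) *
          (Complex.exp ((θ : ℂ) * Complex.I) * Complex.I)‖ := by rw [hmain]
    _ ≤ C0 * (D ^ (2 * r) * φ) := by
        apply mul_le_mul_of_nonneg_left _ hC0.le
        exact hnormint
    _ = C0 * φ * D ^ (2 * r) := by ring
end

section
/- Let n ≥ 2 and r ≥ 1 be integers, and let u and z be nonzero complex numbers with w = z/u = e^{iφ} where 0 < φ < π; put √w = e^{iφ/2}. Then |X*_{n,r}(z,u)| ≤ 4·|u|^r·(Γ(1-1/n)·r!/Γ(r+1-1/n))·|1+√w|^{2r-2} and |X*_{n,r}(u,z)| ≤ 4·|z|^r·(Γ(1-1/n)·r!/Γ(r+1-1/n))·|1+√w|^{2r-2}. -/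
/-- The homogenized polynomial `X*_{n,r}(z,u) = u^r · X_{n,r}(z/u)`, where
`X_{n,r}(X) = ₂F₁(-r, -r-1/n, 1-1/n; X)` is characterized by
`C(r-1/n, r)·X_{n,r}(X) = ∑_{k=0}^r C(r-1/n, r-k)·C(r+1/n, k)·X^k`. -/
noncomputable def Xstar (n r : ℕ) (z u : ℂ) : ℂ :=
  u ^ r * (∑ k ∈ Finset.range (r + 1),
      ((genChoose ((r : ℝ) - 1 / (n : ℝ)) (r - k) *
        genChoose ((r : ℝ) + 1 / (n : ℝ)) k : ℝ) : ℂ) * (z / u) ^ k) /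
    ((genChoose ((r : ℝ) - 1 / (n : ℝ)) r : ℝ) : ℂ)

open Complex Finset Filter

lemma genChoose_zero (β : ℝ) : genChoose β 0 = 1 := by simp [genChoose]

lemma genChoose_succ (β : ℝ) (k : ℕ) :
    genChoose β (k + 1) = (β - k) / (k + 1) * genChoose β k := by
  have h1 : ((k : ℝ) + 1) ≠ 0 := by positivity
  have h2 : (Nat.factorial k : ℝ) ≠ 0 := by
    exact_mod_cast Nat.factorial_ne_zero k
  simp only [genChoose, Finset.prod_range_succ, Nat.factorial_succ, Nat.cast_mul,
    Nat.cast_add, Nat.cast_one]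
  field_simp

lemma genChoose_ne_zero {β : ℝ} (hβ : ∀ i : ℕ, β - i ≠ 0) (k : ℕ) :
    genChoose β k ≠ 0 := by
  have h2 : (Nat.factorial k : ℝ) ≠ 0 := by exact_mod_cast Nat.factorial_ne_zero k
  exact div_ne_zero (Finset.prod_ne_zero_iff.2 fun i _ => hβ i) h2

lemma genChoose_summable {β : ℝ} (hβ : ∀ i : ℕ, β - i ≠ 0) {ρ : ℝ} (hρ0 : 0 < ρ)
    (hρ1 : ρ < 1) : Summable (fun m : ℕ => |genChoose β m| * (m + 1) * ρ ^ m) := by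
  apply summable_of_ratio_test_tendsto_lt_one hρ1
  · filter_upwards with m
    have := genChoose_ne_zero hβ m
    positivity
  · have hev : ∀ᶠ m : ℕ in atTop,
        (1 - (β+1) * (1/((m:ℝ)+1))) * (1 + 1/((m:ℝ)+1)) * ρ =
        ‖|genChoose β (m+1)| * (((m+1 : ℕ) : ℝ) + 1) * ρ ^ (m+1)‖ /
        ‖|genChoose β m| * ((m : ℝ) + 1) * ρ ^ m‖ := by
      filter_upwards [Filter.eventually_ge_atTop (Nat.ceil |β|)] with m hm
      have hmβ : β < (m : ℝ) := lt_of_le_of_ne (le_trans (le_abs_self β)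
        (le_trans (Nat.le_ceil _) (by exact_mod_cast hm)))
        (fun h => hβ m (by rw [h]; ring))
      have hg : (0:ℝ) < |genChoose β m| := abs_pos.2 (genChoose_ne_zero hβ m)
      have hm1 : (0:ℝ) < (m : ℝ) + 1 := by positivity
      have habs : |β - (m:ℝ)| = (m : ℝ) - β := by
        rw [abs_sub_comm, _root_.abs_of_nonneg (by linarith)]
      have hG : |genChoose β (m+1)| = (((m:ℝ)-β)/((m:ℝ)+1)) * |genChoose β m| := by
        rw [genChoose_succ, abs_mul, abs_div, habs,
          _root_.abs_of_nonneg (le_of_lt hm1)]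
      have h1 : (0:ℝ) < |genChoose β (m+1)| * (((m+1 : ℕ) : ℝ) + 1) * ρ ^ (m+1) := by
        refine mul_pos (mul_pos (abs_pos.2 (genChoose_ne_zero hβ (m+1))) ?_) (by positivity)
        positivity
      have h2 : (0:ℝ) < |genChoose β m| * ((m : ℝ) + 1) * ρ ^ m :=
        mul_pos (mul_pos hg hm1) (by positivity)
      rw [Real.norm_eq_abs, Real.norm_eq_abs, _root_.abs_of_pos h1, _root_.abs_of_pos h2, hG]
      have hgne := ne_of_gt hg
      have hm1ne := ne_of_gt hm1
      have hρne := ne_of_gt hρ0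
      push_cast
      rw [pow_succ]
      field_simp
      ring
    apply Tendsto.congr' hev
    have h0 : Tendsto (fun m : ℕ => 1/((m:ℝ)+1)) atTop (nhds (0:ℝ)) :=
      tendsto_one_div_add_atTop_nhds_zero_nat
    have := (((tendsto_const_nhds (x := (1:ℝ))).sub (h0.const_mul (β+1))).mul
      ((tendsto_const_nhds (x := (1:ℝ))).add h0)).mul (tendsto_const_nhds (x := ρ))
    simpa using this

noncomputable def binSer (β : ℝ) (t : ℂ) : ℂ := ∑' m : ℕ, ((genChoose β m : ℝ) : ℂ) * t ^ m

lemma binSer_norm_summable {β : ℝ} (hβ : ∀ i : ℕ, β - i ≠ 0) {ρ : ℝ} (hρ0 : 0 < ρ)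
    (hρ1 : ρ < 1) {t : ℂ} (ht : ‖t‖ ≤ ρ) :
    Summable (fun m : ℕ => ‖((genChoose β m : ℝ) : ℂ) * t ^ m‖) := by
  apply Summable.of_nonneg_of_le (fun m => norm_nonneg _)
    (fun m => ?_) (genChoose_summable hβ hρ0 hρ1)
  rw [norm_mul, norm_pow, Complex.norm_real, Real.norm_eq_abs]
  have h1 : ‖t‖ ^ m ≤ ρ ^ m := pow_le_pow_left₀ (norm_nonneg t) ht m
  have h2 : (1:ℝ) ≤ (m+1) := by exact_mod_cast Nat.one_le_iff_ne_zero.2 (Nat.succ_ne_zero m)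
  calc |genChoose β m| * ‖t‖ ^ m ≤ |genChoose β m| * ρ ^ m :=
        mul_le_mul_of_nonneg_left h1 (abs_nonneg _)
    _ = |genChoose β m| * 1 * ρ ^ m := by ring
    _ ≤ |genChoose β m| * (m+1) * ρ ^ m :=
        mul_le_mul_of_nonneg_right
          (mul_le_mul_of_nonneg_left h2 (abs_nonneg _))
          (pow_nonneg (le_of_lt hρ0) m)

lemma binSer_hasDerivAt {β : ℝ} (hβ : ∀ i : ℕ, β - i ≠ 0) {y : ℂ}
    (hy : ‖y‖ < 1) :
    HasDerivAt (binSer β)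
      (∑' m : ℕ, ((genChoose β m : ℝ) : ℂ) * (m * y ^ (m - 1))) y := by
  set ρ : ℝ := (‖y‖ + 1) / 2 with hρ
  have hρ0 : 0 < ρ := by have := norm_nonneg y; rw [hρ]; linarith
  have hρ1 : ρ < 1 := by rw [hρ]; linarith
  have hyρ : ‖y‖ < ρ := by rw [hρ]; linarith
  apply hasDerivAt_tsum_of_isPreconnected
    (u := fun m => |genChoose β m| * (m + 1) * ρ ^ m / ρ)
    ((genChoose_summable hβ hρ0 hρ1).div_const ρ)
    (Metric.isOpen_ball (x := (0:ℂ)) (ε := ρ)) (convex_ball _ _).isPreconnected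
    (g' := fun m z => ((genChoose β m : ℝ) : ℂ) * (m * z ^ (m - 1)))
  · intro m z _
    exact (hasDerivAt_pow m z).const_mul _
  · intro m z hz
    rw [Metric.mem_ball, dist_zero_right] at hz
    rw [norm_mul, Complex.norm_real, Real.norm_eq_abs, norm_mul, norm_pow,
      Complex.norm_natCast]
    rcases Nat.eq_zero_or_pos m with rfl | hm
    · simp; positivity
    · have h1 : ‖z‖ ^ (m-1) ≤ ρ ^ (m-1) := pow_le_pow_left₀ (norm_nonneg z) hz.le _
      have h2 : ρ ^ (m-1) = ρ ^ m / ρ := by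
        rw [eq_div_iff (ne_of_gt hρ0), ← pow_succ, Nat.sub_add_cancel hm]
      have h3 : (m:ℝ) ≤ (m:ℝ) + 1 := by linarith
      calc |genChoose β m| * ((m:ℝ) * ‖z‖^(m-1))
          = |genChoose β m| * (m:ℝ) * ‖z‖^(m-1) := by ring
        _ ≤ |genChoose β m| * (m:ℝ) * ρ^(m-1) := by
            apply mul_le_mul_of_nonneg_left h1
            positivity
        _ = |genChoose β m| * (m:ℝ) * (ρ^m/ρ) := by rw [← h2]
        _ ≤ |genChoose β m| * ((m:ℝ)+1) * (ρ^m/ρ) := by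
            apply mul_le_mul_of_nonneg_right
              (mul_le_mul_of_nonneg_left h3 (abs_nonneg _))
            positivity
        _ = |genChoose β m| * ((m:ℝ)+1) * ρ^m/ρ := by ring
  · exact Metric.mem_ball_self hρ0
  · apply Summable.of_norm
    exact binSer_norm_summable hβ hρ0 hρ1 (by simpa using le_of_lt hρ0)
  · rw [Metric.mem_ball, dist_zero_right]; exact hyρ

lemma binSer_deriv_norm_summable {β : ℝ} (hβ : ∀ i : ℕ, β - i ≠ 0) {ρ : ℝ} (hρ0 : 0 < ρ)
    (hρ1 : ρ < 1) {t : ℂ} (ht : ‖t‖ ≤ ρ) :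
    Summable (fun m : ℕ => ((genChoose β m : ℝ) : ℂ) * (m * t ^ (m - 1))) := by
  apply Summable.of_norm
  apply Summable.of_nonneg_of_le (fun m => norm_nonneg _) (fun m => ?_)
    ((genChoose_summable hβ hρ0 hρ1).div_const ρ)
  rw [norm_mul, Complex.norm_real, Real.norm_eq_abs, norm_mul, norm_pow,
    Complex.norm_natCast]
  rcases Nat.eq_zero_or_pos m with rfl | hm
  · simp; positivity
  · have h1 : ‖t‖ ^ (m-1) ≤ ρ ^ (m-1) := pow_le_pow_left₀ (norm_nonneg t) ht _
    have h2 : ρ ^ (m-1) = ρ ^ m / ρ := by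
      rw [eq_div_iff (ne_of_gt hρ0), ← pow_succ, Nat.sub_add_cancel hm]
    have h3 : (m:ℝ) ≤ (m:ℝ) + 1 := by linarith
    calc |genChoose β m| * ((m:ℝ) * ‖t‖^(m-1))
        = |genChoose β m| * (m:ℝ) * ‖t‖^(m-1) := by ring
      _ ≤ |genChoose β m| * (m:ℝ) * ρ^(m-1) := by
          apply mul_le_mul_of_nonneg_left h1; positivity
      _ = |genChoose β m| * (m:ℝ) * (ρ^m/ρ) := by rw [← h2]
      _ ≤ |genChoose β m| * ((m:ℝ)+1) * (ρ^m/ρ) := by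
          apply mul_le_mul_of_nonneg_right
            (mul_le_mul_of_nonneg_left h3 (abs_nonneg _))
          positivity
      _ = |genChoose β m| * ((m:ℝ)+1) * ρ^m/ρ := by ring

lemma binSer_ode {β : ℝ} (hβ : ∀ i : ℕ, β - i ≠ 0) {y : ℂ} (hy : ‖y‖ < 1) :
    (1 + y) * (∑' m : ℕ, ((genChoose β m : ℝ) : ℂ) * (m * y ^ (m - 1))) =
      (β : ℂ) * binSer β y := by
  set c : ℕ → ℂ := fun m => ((genChoose β m : ℝ) : ℂ) with hc
  set ρ : ℝ := (‖y‖ + 1) / 2 with hρ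
  have hρ0 : 0 < ρ := by have := norm_nonneg y; rw [hρ]; linarith
  have hρ1 : ρ < 1 := by rw [hρ]; linarith
  have hyρ : ‖y‖ ≤ ρ := by rw [hρ]; linarith
  have hsum1 : Summable (fun m : ℕ => c m * (m * y ^ (m - 1))) :=
    binSer_deriv_norm_summable hβ hρ0 hρ1 hyρ
  have hsum0 : Summable (fun m : ℕ => c m * y ^ m) :=
    Summable.of_norm (binSer_norm_summable hβ hρ0 hρ1 hyρ)
  have hsum1' : Summable (fun m : ℕ => c (m+1) * ((m+1 : ℕ) * y ^ m)) := by
    have := (summable_nat_add_iff 1).mpr hsum1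
    apply this.congr
    intro m; simp
  have hterm : ∀ m : ℕ, c (m+1) * ((m+1 : ℕ) * y ^ m) + c m * (m * y ^ m)
      = (β : ℂ) * (c m * y ^ m) := by
    intro m
    have hr : ((m:ℝ) + 1) * genChoose β (m+1) = (β - m) * genChoose β m := by
      rw [genChoose_succ]; field_simp
    have hrc : ((m:ℂ) + 1) * c (m+1) = ((β:ℂ) - m) * c m := by
      have := congrArg Complex.ofReal hr
      push_cast at this
      rw [hc]
      convert this using 2 <;> push_cast <;> ring
    have : (((m+1 : ℕ) : ℂ)) * c (m+1) = ((β:ℂ) - m) * c m := by push_cast; push_cast at hrc; exact hrc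
    calc c (m+1) * ((m+1 : ℕ) * y ^ m) + c m * (m * y ^ m)
        = ((((m+1 : ℕ) : ℂ)) * c (m+1) + (m:ℂ) * c m) * y ^ m := by ring
      _ = (((β:ℂ) - m) * c m + (m:ℂ) * c m) * y ^ m := by rw [this]
      _ = (β : ℂ) * (c m * y ^ m) := by ring
  have hyD : y * (∑' m : ℕ, c m * (m * y ^ (m - 1))) = ∑' m : ℕ, c m * (m * y ^ m) := by
    rw [← tsum_mul_left]
    apply tsum_congr
    intro m
    rcases Nat.eq_zero_or_pos m with rfl | hm
    · simp
    · have : y * y ^ (m - 1) = y ^ m := by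
        rw [← pow_succ', Nat.sub_add_cancel hm]
      calc y * (c m * (m * y ^ (m-1))) = c m * ((m:ℂ) * (y * y ^ (m-1))) := by ring
        _ = c m * (m * y ^ m) := by rw [this]
  have hD : (∑' m : ℕ, c m * (m * y ^ (m - 1))) =
      ∑' m : ℕ, c (m+1) * ((m+1 : ℕ) * y ^ m) := by
    rw [hsum1.tsum_eq_zero_add]
    simp
  have hsum2 : Summable (fun m : ℕ => c m * ((m:ℂ) * y ^ m)) := by
    have : (fun m : ℕ => c m * ((m:ℂ) * y ^ m)) = fun m => y * (c m * (m * y ^ (m-1))) := by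
      funext m
      rcases Nat.eq_zero_or_pos m with rfl | hm
      · simp
      · have : y * y ^ (m - 1) = y ^ m := by rw [← pow_succ', Nat.sub_add_cancel hm]
        calc c m * ((m:ℂ) * y ^ m) = c m * ((m:ℂ) * (y * y^(m-1))) := by rw [this]
          _ = y * (c m * (m * y ^ (m-1))) := by ring
    rw [this]
    exact hsum1.mul_left y
  calc (1 + y) * (∑' m : ℕ, c m * (m * y ^ (m - 1)))
      = (∑' m : ℕ, c m * (m * y ^ (m - 1))) + y * (∑' m : ℕ, c m * (m * y ^ (m - 1))) := by
        ring
    _ = (∑' m : ℕ, c (m+1) * ((m+1 : ℕ) * y ^ m)) + ∑' m : ℕ, c m * (m * y ^ m) := by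
        rw [hyD, hD]
    _ = ∑' m : ℕ, (c (m+1) * ((m+1 : ℕ) * y ^ m) + c m * (m * y ^ m)) := by
        rw [← hsum1'.tsum_add hsum2]
    _ = ∑' m : ℕ, (β : ℂ) * (c m * y ^ m) := by exact tsum_congr hterm
    _ = (β : ℂ) * binSer β y := by rw [tsum_mul_left]; rfl

lemma one_add_slitPlane {y : ℂ} (hy : ‖y‖ < 1) :
    (1 + y) ∈ Complex.slitPlane := by
  rw [Complex.mem_slitPlane_iff]
  left
  have := Complex.abs_re_le_norm y
  have h2 := abs_lt.1 (lt_of_le_of_lt this hy)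
  simp only [Complex.add_re, Complex.one_re]
  linarith [h2.1]

lemma one_add_ne_zero {y : ℂ} (hy : ‖y‖ < 1) : (1 + y) ≠ 0 :=
  Complex.slitPlane_ne_zero (one_add_slitPlane hy)

lemma binSer_eq_cpow {β : ℝ} (hβ : ∀ i : ℕ, β - i ≠ 0) {y : ℂ} (hy : ‖y‖ < 1) :
    binSer β y = (1 + y) ^ (β : ℂ) := by
  set h : ℂ → ℂ := fun x => binSer β x * (1 + x) ^ (-(β:ℂ)) with hh
  have hd : ∀ x ∈ Metric.ball (0:ℂ) 1, HasDerivAt h 0 x := by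
    intro x hx
    rw [Metric.mem_ball, dist_zero_right] at hx
    have hb := binSer_hasDerivAt hβ hx
    have hne := one_add_ne_zero hx
    have hcp : HasDerivAt (fun x : ℂ => (1 + x) ^ (-(β:ℂ)))
        (-(β:ℂ) * (1 + x) ^ (-(β:ℂ) - 1) * 1) x :=
      HasDerivAt.cpow_const ((hasDerivAt_id x).const_add 1) (one_add_slitPlane hx)
    have := hb.mul hcp
    refine (this.congr_deriv ?_ : HasDerivAt h 0 x)
    have hsplit : (1 + x) ^ (-(β:ℂ)) = (1 + x) ^ (-(β:ℂ) - 1) * (1 + x) := by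
      have h := Complex.cpow_add (-(β:ℂ) - 1) 1 hne
      rw [Complex.cpow_one, show (-(β:ℂ) - 1 + 1) = -(β:ℂ) by ring] at h
      exact h
    rw [hsplit]
    have hode := binSer_ode hβ hx
    linear_combination ((1 + x) ^ (-(β:ℂ) - 1)) * hode
  have hconst : h y = h 0 := by
    apply Convex.is_const_of_fderivWithin_eq_zero (𝕜 := ℂ) (convex_ball (0:ℂ) 1)
    · intro x hx
      exact ((hd x hx).differentiableAt).differentiableWithinAt
    · intro x hx
      rw [fderivWithin_of_isOpen Metric.isOpen_ball hx, (hd x hx).hasFDerivAt.fderiv]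
      refine ContinuousLinearMap.ext fun z => ?_
      simp [ContinuousLinearMap.smulRight_apply]
    · rw [Metric.mem_ball, dist_zero_right]; simpa using hy
    · rw [Metric.mem_ball, dist_zero_right]; simp
  have hb0 : binSer β 0 = 1 := by
    rw [binSer, tsum_eq_single 0 (fun m hm => by simp [zero_pow hm])]
    simp [genChoose_zero]
  have h0 : h 0 = 1 := by
    rw [hh]
    simp only [hb0, add_zero, Complex.one_cpow, one_mul]
  rw [h0] at hconst
  have hne := one_add_ne_zero hy
  have hp : (1 + y) ^ (β:ℂ) ≠ 0 := by
    intro hzero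
    rcases (Complex.cpow_eq_zero_iff _ _).1 hzero with ⟨h1, _⟩
    exact hne h1
  rw [hh] at hconst
  simp only [Complex.cpow_neg] at hconst
  rwa [mul_inv_eq_one₀ hp] at hconst

lemma binSer_hasSum {β : ℝ} (hβ : ∀ i : ℕ, β - i ≠ 0) {y : ℂ} (hy : ‖y‖ < 1) :
    HasSum (fun m : ℕ => ((genChoose β m : ℝ) : ℂ) * y ^ m) ((1 + y) ^ (β : ℂ)) := by
  have hs : Summable (fun m : ℕ => ((genChoose β m : ℝ) : ℂ) * y ^ m) := by
    apply Summable.of_norm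
    exact binSer_norm_summable hβ (by linarith [norm_nonneg y] :
      (0:ℝ) < (‖y‖ + 1)/2) (by linarith) (by linarith)
  have := hs.hasSum
  rwa [show ∑' m : ℕ, ((genChoose β m : ℝ) : ℂ) * y ^ m = (1+y) ^ (β:ℂ) from
    binSer_eq_cpow hβ hy] at this

open MeasureTheory intervalIntegral in
lemma coeff_extract (α β : ℝ) (hα : ∀ i : ℕ, α - i ≠ 0) (hβ : ∀ i : ℕ, β - i ≠ 0)
    (w : ℂ) (hw : ‖w‖ = 1) (r : ℕ) {ρ : ℝ} (hρ0 : 0 < ρ) (hρ1 : ρ < 1)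
    {B : ℝ} (hB : ∀ θ : ℝ,
      ‖(1 + w * ((ρ:ℂ) * Complex.exp (θ * Complex.I))) ^ ((α:ℝ):ℂ) *
        (1 + (ρ:ℂ) * Complex.exp (θ * Complex.I)) ^ ((β:ℝ):ℂ)‖ ≤ B) :
    ‖∑ k ∈ Finset.range (r+1),
      ((genChoose α k : ℝ):ℂ) * w^k * ((genChoose β (r-k) : ℝ):ℂ)‖ * ρ^r ≤ B := by
  have hπ : (0:ℝ) < 2 * Real.pi := by positivity
  set t : ℝ → ℂ := fun θ => (ρ:ℂ) * Complex.exp (θ * Complex.I) with ht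
  have habs_t : ∀ θ, ‖t θ‖ = ρ := by
    intro θ
    rw [ht]
    simp only [norm_mul, Complex.norm_real, Real.norm_eq_abs, Complex.norm_exp_ofReal_mul_I, mul_one]
    exact abs_of_pos hρ0
  have habs_wt : ∀ θ, ‖w * t θ‖ = ρ := by
    intro θ; rw [norm_mul, hw, one_mul, habs_t]
  set f : ℕ → ℝ → ℂ := fun k θ => ((genChoose α k : ℝ):ℂ) * (w * t θ)^k with hf
  set g : ℕ → ℝ → ℂ := fun k θ => ((genChoose β k : ℝ):ℂ) * (t θ)^k with hg
  set A : ℕ → ℂ := fun j => ∑ k ∈ Finset.range (j+1),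
    ((genChoose α k : ℝ):ℂ) * w^k * ((genChoose β (j-k) : ℝ):ℂ) with hA
  set F : ℕ → ℝ → ℂ := fun j θ => A j * (t θ)^j * Complex.exp (-(r:ℂ) * (θ * Complex.I))
    with hF
  have hfg : ∀ (j : ℕ) (θ : ℝ), (∑ k ∈ Finset.range (j+1), f k θ * g (j-k) θ)
      = A j * (t θ)^j := by
    intro j θ
    rw [hA, Finset.sum_mul]
    apply Finset.sum_congr rfl
    intro k hk
    have hkj : k ≤ j := Nat.lt_succ_iff.1 (Finset.mem_range.1 hk)
    rw [hf, hg]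
    simp only
    rw [mul_pow]
    have hpow : t θ ^ k * t θ ^ (j-k) = t θ ^ j := by
      rw [← pow_add, Nat.add_sub_cancel' hkj]
    linear_combination (((genChoose α k : ℝ):ℂ) * w^k * ((genChoose β (j-k) : ℝ):ℂ)) * hpow
  have hnormf : ∀ θ, Summable (fun k => ‖f k θ‖) := by
    intro θ
    exact binSer_norm_summable hα hρ0 hρ1 (le_of_eq (habs_wt θ))
  have hnormg : ∀ θ, Summable (fun k => ‖g k θ‖) := by
    intro θ
    exact binSer_norm_summable hβ hρ0 hρ1 (le_of_eq (habs_t θ))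
  have hG : ∀ θ : ℝ,
      (1 + w * t θ) ^ ((α:ℝ):ℂ) * (1 + t θ) ^ ((β:ℝ):ℂ)
        * Complex.exp (-(r:ℂ) * (θ * Complex.I)) = ∑' j, F j θ := by
    intro θ
    have h1 : (1 + w * t θ) ^ ((α:ℝ):ℂ) = ∑' k, f k θ :=
      ((binSer_hasSum hα (by rw [habs_wt θ]; exact hρ1)).tsum_eq).symm
    have h2 : (1 + t θ) ^ ((β:ℝ):ℂ) = ∑' k, g k θ :=
      ((binSer_hasSum hβ (by rw [habs_t θ]; exact hρ1)).tsum_eq).symm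
    rw [h1, h2, tsum_mul_tsum_eq_tsum_sum_range_of_summable_norm (hnormf θ) (hnormg θ),
      ← tsum_mul_right]
    exact tsum_congr fun j => by rw [hfg j θ, hF]
  have hNs : Summable (fun j => ‖A j‖ * ρ^j) := by
    have := summable_norm_sum_mul_range_of_summable_norm (hnormf 0) (hnormg 0)
    apply this.congr
    intro j
    rw [hfg j 0, norm_mul, norm_pow]
    rw [habs_t]
  have hFint : ∀ j, Integrable (F j) (volume.restrict (Set.Ioc 0 (2*Real.pi))) := by
    intro j
    apply Continuous.integrableOn_Ioc
    rw [hF]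
    apply Continuous.mul
    · apply Continuous.mul continuous_const
      apply Continuous.pow
      exact continuous_const.mul (Complex.continuous_exp.comp
        (Complex.continuous_ofReal.mul continuous_const))
    · exact Complex.continuous_exp.comp
        (continuous_const.mul (Complex.continuous_ofReal.mul continuous_const))
  have hFnorm : ∀ j θ, ‖F j θ‖ = ‖A j‖ * ρ^j := by
    intro j θ
    rw [hF]
    simp only [norm_mul, norm_pow, habs_t, Complex.norm_exp]
    have : (-(r:ℂ) * (↑θ * Complex.I)).re = 0 := by simp
    rw [this, Real.exp_zero, mul_one]
  have hImain : A r * (ρ:ℂ)^r * (2*Real.pi : ℝ) =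
      ∫ θ in (0:ℝ)..(2*Real.pi), (1 + w * t θ) ^ ((α:ℝ):ℂ) * (1 + t θ) ^ ((β:ℝ):ℂ)
        * Complex.exp (-(r:ℂ) * (θ * Complex.I)) := by
    rw [intervalIntegral.integral_of_le (le_of_lt hπ)]
    have step1 : ∫ θ in Set.Ioc (0:ℝ) (2*Real.pi), (1 + w * t θ) ^ ((α:ℝ):ℂ)
        * (1 + t θ) ^ ((β:ℝ):ℂ) * Complex.exp (-(r:ℂ) * (θ * Complex.I))
        = ∫ θ in Set.Ioc (0:ℝ) (2*Real.pi), ∑' j, F j θ := by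
      apply MeasureTheory.integral_congr_ae
      exact Filter.Eventually.of_forall (fun θ => hG θ)
    rw [step1]
    have hFsumint : Summable fun j => ∫ θ in Set.Ioc (0:ℝ) (2*Real.pi), ‖F j θ‖ := by
      apply Summable.congr (hNs.mul_left (2*Real.pi))
      intro j
      rw [MeasureTheory.setIntegral_congr_fun measurableSet_Ioc
        (fun θ _ => hFnorm j θ)]
      rw [MeasureTheory.setIntegral_const]
      rw [MeasureTheory.measureReal_def, Real.volume_Ioc, sub_zero, ENNReal.toReal_ofReal (le_of_lt hπ)]
      rw [smul_eq_mul]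
    rw [← MeasureTheory.integral_tsum_of_summable_integral_norm hFint hFsumint]
    have hI : ∀ j, (∫ θ in Set.Ioc (0:ℝ) (2*Real.pi), F j θ)
        = if j = r then A r * (ρ:ℂ)^r * (2*Real.pi : ℝ) else 0 := by
      intro j
      rw [← intervalIntegral.integral_of_le (le_of_lt hπ)]
      have hFeq : ∀ θ : ℝ, F j θ = (A j * (ρ:ℂ)^j) *
          Complex.exp ((((j:ℂ) - r) * Complex.I) * θ) := by
        intro θ
        have h1 : Complex.exp ((θ:ℂ)*Complex.I)^j * Complex.exp (-(r:ℂ)*((θ:ℂ)*Complex.I))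
            = Complex.exp ((((j:ℂ)-r)*Complex.I)*θ) := by
          rw [← Complex.exp_nat_mul, ← Complex.exp_add]
          congr 1
          ring
        rw [hF]
        simp only
        rw [ht]
        simp only [mul_pow]
        linear_combination (A j * ((ρ:ℂ))^j) * h1
      simp_rw [hFeq]
      rw [intervalIntegral.integral_const_mul]
      rcases eq_or_ne j r with rfl | hj
      · simp only [if_pos rfl]
        have : ((j:ℂ) - j) * Complex.I = 0 := by ring
        simp_rw [this, zero_mul, Complex.exp_zero]
        rw [intervalIntegral.integral_const]
        simp only [sub_zero, real_smul, mul_one]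
        push_cast
        ring
      · rw [if_neg hj]
        have hc : ((j:ℂ) - r) * Complex.I ≠ 0 := by
          apply mul_ne_zero _ Complex.I_ne_zero
          intro h
          apply hj
          have : (j:ℂ) = r := by linear_combination h
          exact_mod_cast this
        rw [integral_exp_mul_complex hc]
        have h2 : Complex.exp (((j:ℂ) - r) * Complex.I * (2*Real.pi : ℝ)) = 1 := by
          have := Complex.exp_int_mul_two_pi_mul_I ((j:ℤ) - (r:ℤ))
          rw [← this]
          congr 1
          push_cast
          ring
        rw [h2]
        simp
    rw [funext hI] at *
    rw [tsum_ite_eq]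
  -- final bound
  have hbound : ‖A r * (ρ:ℂ)^r * (2*Real.pi : ℝ)‖ ≤ B * (2*Real.pi) := by
    rw [hImain]
    have := intervalIntegral.norm_integral_le_of_norm_le_const
      (C := B) (f := fun θ => (1 + w * t θ) ^ ((α:ℝ):ℂ) * (1 + t θ) ^ ((β:ℝ):ℂ)
        * Complex.exp (-(r:ℂ) * (θ * Complex.I))) (a := 0) (b := 2*Real.pi) ?_
    · skip
      calc ‖_‖ ≤ B * |2*Real.pi - 0| := this
        _ = B * (2*Real.pi) := by rw [sub_zero, abs_of_pos hπ]
    · intro θ _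
      rw [norm_mul]
      have h0 : ‖Complex.exp (-(r:ℂ) * (θ * Complex.I))‖ = 1 := by
        rw [Complex.norm_exp]
        have : (-(r:ℂ) * (↑θ * Complex.I)).re = 0 := by simp
        rw [this, Real.exp_zero]
      rw [h0, mul_one]
      exact hB θ
  have habsA : ‖A r * (ρ:ℂ)^r * (2*Real.pi : ℝ)‖
      = ‖A r‖ * ρ^r * (2*Real.pi) := by
    rw [norm_mul, norm_mul, norm_pow, Complex.norm_real, Real.norm_eq_abs, Complex.norm_real, Real.norm_eq_abs,
      abs_of_pos hρ0, abs_of_pos hπ]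
  rw [habsA] at hbound
  rw [hA] at *
  nlinarith [hπ]

lemma abs_one_add_sq (ρ θ : ℝ) :
    (‖1 + (ρ:ℂ) * Complex.exp ((θ:ℂ) * Complex.I)‖)^2
      = 1 + 2*ρ*Real.cos θ + ρ^2 := by
  rw [Complex.sq_norm, Complex.normSq_apply]
  simp only [Complex.add_re, Complex.add_im, Complex.one_re, Complex.one_im,
    Complex.mul_re, Complex.mul_im, Complex.ofReal_re, Complex.ofReal_im,
    Complex.exp_ofReal_mul_I_re, Complex.exp_ofReal_mul_I_im]
  nlinarith [Real.sin_sq_add_cos_sq θ]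

lemma trig_prod_le (ρ φ θ : ℝ) (hρ0 : 0 ≤ ρ) (hc : 0 ≤ Real.cos (φ/2)) :
    (1 + 2*ρ*Real.cos θ + ρ^2) * (1 + 2*ρ*Real.cos (θ+φ) + ρ^2)
      ≤ (1 + ρ^2 + 2*ρ*Real.cos (φ/2))^2 := by
  have e1 : Real.cos θ = Real.cos (θ+φ/2) * Real.cos (φ/2)
      + Real.sin (θ+φ/2) * Real.sin (φ/2) := by
    rw [← Real.cos_sub]; ring_nf
  have e2 : Real.cos (θ+φ) = Real.cos (θ+φ/2) * Real.cos (φ/2)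
      - Real.sin (θ+φ/2) * Real.sin (φ/2) := by
    rw [← Real.cos_add]; ring_nf
  rw [e1, e2]
  set x := Real.cos (θ + φ/2)
  set sa := Real.sin (θ + φ/2)
  set c := Real.cos (φ/2)
  set sd := Real.sin (φ/2)
  have hsa : sa^2 = 1 - x^2 := by
    have := Real.sin_sq_add_cos_sq (θ + φ/2); linarith [this]
  have hsd : sd^2 = 1 - c^2 := by
    have := Real.sin_sq_add_cos_sq (φ/2); linarith [this]
  have h3 : sa^2*sd^2 = (1-x^2)*(1-c^2) := by rw [hsa, hsd]
  have hx1 : x ≤ 1 := Real.cos_le_one _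
  have hx2 : -1 ≤ x := Real.neg_one_le_cos _
  have hpos : 0 ≤ 4*ρ*(1-x)*(c*(1+ρ^2) + ρ*(1+x)) := by
    apply mul_nonneg
    · apply mul_nonneg (by linarith) (by linarith)
    · have h4 : 0 ≤ c*(1+ρ^2) := mul_nonneg hc (by positivity)
      have h5 : 0 ≤ ρ*(1+x) := mul_nonneg hρ0 (by linarith)
      linarith
  nlinarith [h3, hpos]

lemma rpow_prod_bound {a b M x : ℝ} (r : ℕ) (hr : 1 ≤ r)
    (ha0 : 0 < a) (ha2 : a ≤ 2) (hb0 : 0 < b) (hb2 : b ≤ 2)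
    (hab : a * b ≤ M) (hx0 : 0 < x) (hx1 : x ≤ 1) :
    a ^ ((r:ℝ) - x) * b ^ ((r:ℝ) + x) ≤ 4 * M ^ (r - 1) := by
  have hM0 : 0 < M := lt_of_lt_of_le (mul_pos ha0 hb0) hab
  have hra : (r:ℝ) - x = ((r-1 : ℕ):ℝ) + (1 - x) := by
    have : ((r-1:ℕ):ℝ) = (r:ℝ) - 1 := by
      have := Nat.cast_sub hr (R := ℝ); simpa using this
    rw [this]; ring
  have hrb : (r:ℝ) + x = ((r-1 : ℕ):ℝ) + (1 + x) := by
    have : ((r-1:ℕ):ℝ) = (r:ℝ) - 1 := by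
      have := Nat.cast_sub hr (R := ℝ); simpa using this
    rw [this]; ring
  rw [hra, hrb, Real.rpow_add ha0, Real.rpow_add hb0, Real.rpow_natCast,
    Real.rpow_natCast]
  have key1 : a^(r-1) * b^(r-1) ≤ M^(r-1) := by
    rw [← mul_pow]
    exact pow_le_pow_left₀ (by positivity) hab _
  have key2 : a ^ ((1:ℝ) - x) ≤ 2 ^ ((1:ℝ) - x) :=
    Real.rpow_le_rpow (le_of_lt ha0) ha2 (by linarith)
  have key3 : b ^ ((1:ℝ) + x) ≤ 2 ^ ((1:ℝ) + x) :=
    Real.rpow_le_rpow (le_of_lt hb0) hb2 (by linarith)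
  have key4 : (2:ℝ) ^ ((1:ℝ) - x) * 2 ^ ((1:ℝ) + x) = 4 := by
    rw [← Real.rpow_add (by norm_num)]
    norm_num
  have h2x : (0:ℝ) < 2 ^ ((1:ℝ) - x) := Real.rpow_pos_of_pos (by norm_num) _
  have h2x' : (0:ℝ) < 2 ^ ((1:ℝ) + x) := Real.rpow_pos_of_pos (by norm_num) _
  have hax : (0:ℝ) < a ^ ((1:ℝ) - x) := Real.rpow_pos_of_pos ha0 _
  have hbx : (0:ℝ) < b ^ ((1:ℝ) + x) := Real.rpow_pos_of_pos hb0 _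
  calc a^(r-1) * a^((1:ℝ)-x) * (b^(r-1) * b^((1:ℝ)+x))
      = (a^(r-1) * b^(r-1)) * (a^((1:ℝ)-x) * b^((1:ℝ)+x)) := by ring
    _ ≤ M^(r-1) * (2^((1:ℝ)-x) * 2^((1:ℝ)+x)) := by
        apply mul_le_mul key1
        · exact mul_le_mul key2 key3 (le_of_lt hbx) (le_of_lt h2x)
        · positivity
        · positivity
    _ = 4 * M^(r-1) := by rw [key4]; ring

lemma abs_cpow_real (z : ℂ) (γ : ℝ) (hz : z ≠ 0) :
    ‖z ^ ((γ:ℝ):ℂ)‖ = (‖z‖) ^ γ := by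
  rw [Complex.norm_cpow_of_ne_zero hz]
  simp

lemma pointwise_bound (n r : ℕ) (hn : 2 ≤ n) (hr : 1 ≤ r) (φ : ℝ)
    (hφ0 : 0 < φ) (hφπ : φ < Real.pi) {ρ : ℝ} (hρ0 : 0 < ρ) (hρ1 : ρ < 1) (θ : ℝ) :
    ‖(1 + Complex.exp ((φ:ℂ) * Complex.I) * ((ρ:ℂ) * Complex.exp ((θ:ℂ) * Complex.I)))
        ^ ((((r:ℝ) + 1/(n:ℝ)):ℝ):ℂ) *
      (1 + (ρ:ℂ) * Complex.exp ((θ:ℂ) * Complex.I)) ^ ((((r:ℝ) - 1/(n:ℝ)):ℝ):ℂ)‖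
      ≤ 4 * (1 + ρ^2 + 2*ρ*Real.cos (φ/2)) ^ (r - 1) := by
  have hn0 : (0:ℝ) < n := by positivity
  have hx0 : (0:ℝ) < 1/(n:ℝ) := by positivity
  have hx1 : 1/(n:ℝ) ≤ 1 := by
    rw [div_le_one hn0]
    exact_mod_cast le_trans (by norm_num) hn
  have habs_t : ‖(ρ:ℂ) * Complex.exp ((θ:ℂ) * Complex.I)‖ = ρ := by
    simp only [norm_mul, Complex.norm_real, Real.norm_eq_abs, Complex.norm_exp_ofReal_mul_I, mul_one]
    exact abs_of_pos hρ0
  have hwt : Complex.exp ((φ:ℂ) * Complex.I) * ((ρ:ℂ) * Complex.exp ((θ:ℂ) * Complex.I))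
      = (ρ:ℂ) * Complex.exp (((θ+φ:ℝ):ℂ) * Complex.I) := by
    rw [Complex.ofReal_add, add_mul, Complex.exp_add]
    ring
  have habs_wt : ‖Complex.exp ((φ:ℂ) * Complex.I) *
      ((ρ:ℂ) * Complex.exp ((θ:ℂ) * Complex.I))‖ = ρ := by
    rw [hwt]
    simp only [norm_mul, Complex.norm_real, Real.norm_eq_abs, Complex.norm_exp_ofReal_mul_I, mul_one]
    exact abs_of_pos hρ0
  have hne1 : (1 + (ρ:ℂ) * Complex.exp ((θ:ℂ) * Complex.I)) ≠ 0 :=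
    one_add_ne_zero (by rw [habs_t]; exact hρ1)
  have hne2 : (1 + Complex.exp ((φ:ℂ) * Complex.I) * ((ρ:ℂ) * Complex.exp ((θ:ℂ) * Complex.I))) ≠ 0 :=
    one_add_ne_zero (by rw [habs_wt]; exact hρ1)
  set a := ‖1 + (ρ:ℂ) * Complex.exp ((θ:ℂ) * Complex.I)‖ with haa
  set b := ‖1 + Complex.exp ((φ:ℂ) * Complex.I) * ((ρ:ℂ) * Complex.exp ((θ:ℂ) * Complex.I))‖
    with hbb
  have ha0 : 0 < a := norm_pos_iff.2 hne1
  have hb0 : 0 < b := norm_pos_iff.2 hne2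
  have ha_sq : a^2 = 1 + 2*ρ*Real.cos θ + ρ^2 := abs_one_add_sq ρ θ
  have hb_sq : b^2 = 1 + 2*ρ*Real.cos (θ+φ) + ρ^2 := by
    rw [hbb, hwt]
    exact abs_one_add_sq ρ (θ+φ)
  have hcosθ := Real.cos_le_one θ
  have hcosθφ := Real.cos_le_one (θ+φ)
  have ha2 : a ≤ 2 := by nlinarith
  have hb2 : b ≤ 2 := by nlinarith
  have hc : 0 ≤ Real.cos (φ/2) := by
    apply Real.cos_nonneg_of_mem_Icc
    constructor <;> [linarith [Real.pi_pos]; linarith]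
  set M := 1 + ρ^2 + 2*ρ*Real.cos (φ/2) with hM
  have hM0 : 0 < M := by
    have : 0 ≤ 2*ρ*Real.cos (φ/2) := by positivity
    rw [hM]; nlinarith
  have hab : a * b ≤ M := by
    have hprod := trig_prod_le ρ φ θ (le_of_lt hρ0) hc
    have h1 : (a*b)^2 ≤ M^2 := by
      rw [mul_pow, ha_sq, hb_sq, hM]; exact hprod
    exact (pow_le_pow_iff_left₀ (by positivity) hM0.le two_ne_zero).1 h1
  rw [norm_mul, abs_cpow_real _ _ hne2, abs_cpow_real _ _ hne1, ← hbb, ← haa]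
  calc b ^ ((r:ℝ) + 1/(n:ℝ)) * a ^ ((r:ℝ) - 1/(n:ℝ))
      = a ^ ((r:ℝ) - 1/(n:ℝ)) * b ^ ((r:ℝ) + 1/(n:ℝ)) := by ring
    _ ≤ 4 * M ^ (r-1) := rpow_prod_bound r hr ha0 ha2 hb0 hb2 hab hx0 hx1

lemma inv_n_lt_one {n : ℕ} (hn : 2 ≤ n) : 0 < 1/(n:ℝ) ∧ 1/(n:ℝ) ≤ 1/2 := by
  have hn0 : (0:ℝ) < n := by positivity
  constructor
  · positivity
  · apply one_div_le_one_div_of_le (by norm_num)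
    exact_mod_cast hn

lemma sub_ne_int {n : ℕ} (hn : 2 ≤ n) (r : ℕ) : ∀ i : ℕ, ((r:ℝ) - 1/(n:ℝ)) - i ≠ 0 := by
  obtain ⟨h1, h2⟩ := inv_n_lt_one hn
  intro i h
  have heq : 1/(n:ℝ) = (r:ℝ) - i := by linarith
  rcases le_or_gt r i with hri | hri
  · have : (r:ℝ) ≤ i := by exact_mod_cast hri
    linarith
  · have : (i:ℝ) + 1 ≤ r := by exact_mod_cast hri
    linarith

lemma add_ne_int {n : ℕ} (hn : 2 ≤ n) (r : ℕ) : ∀ i : ℕ, ((r:ℝ) + 1/(n:ℝ)) - i ≠ 0 := by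
  obtain ⟨h1, h2⟩ := inv_n_lt_one hn
  intro i h
  have heq : 1/(n:ℝ) = (i:ℝ) - r := by linarith
  rcases le_or_gt i r with hri | hri
  · have : (i:ℝ) ≤ r := by exact_mod_cast hri
    linarith
  · have : (r:ℝ) + 1 ≤ i := by exact_mod_cast hri
    linarith

lemma genChoose_main_pos {n : ℕ} (hn : 2 ≤ n) (r : ℕ) :
    0 < genChoose ((r:ℝ) - 1/(n:ℝ)) r := by
  obtain ⟨h1, h2⟩ := inv_n_lt_one hn
  apply div_pos
  · apply Finset.prod_pos
    intro i hi
    have : (i:ℝ) + 1 ≤ r := by exact_mod_cast Finset.mem_range.1 hi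
    linarith
  · exact_mod_cast Nat.factorial_pos r

lemma genChoose_main_eq {n : ℕ} (hn : 2 ≤ n) (r : ℕ) :
    genChoose ((r:ℝ) - 1/(n:ℝ)) r =
      Real.Gamma ((r:ℝ) + 1 - 1/(n:ℝ)) / (Real.Gamma (1 - 1/(n:ℝ)) * (Nat.factorial r : ℝ)) := by
  obtain ⟨h1, h2⟩ := inv_n_lt_one hn
  set X : ℝ := (r:ℝ) + 1 - 1/(n:ℝ) with hX
  have claim : ∀ m : ℕ, m ≤ r → ∏ i ∈ Finset.range m, ((r:ℝ) - 1/(n:ℝ) - i)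
      = Real.Gamma X / Real.Gamma (X - m) := by
    intro m hm
    induction m with
    | zero =>
      simp only [Finset.range_zero, Finset.prod_empty, Nat.cast_zero, sub_zero]
      rw [div_self]
      apply ne_of_gt
      apply Real.Gamma_pos_of_pos
      rw [hX]; linarith
    | succ m ih =>
      have hm' : m ≤ r := le_of_lt (Nat.lt_of_succ_le hm)
      have hmr : (m:ℝ) + 1 ≤ r := by exact_mod_cast hm
      have hy : 0 < X - m - 1 := by rw [hX]; linarith
      have hy' : 0 < X - m := by rw [hX]; linarith
      rw [Finset.prod_range_succ, ih hm']
      have hGam : Real.Gamma (X - m) = (X - m - 1) * Real.Gamma (X - m - 1) := by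
        have := Real.Gamma_add_one (ne_of_gt hy)
        rw [show X - m - 1 + 1 = X - m by ring] at this
        exact this
      have hne1 : Real.Gamma (X - m - 1) ≠ 0 := ne_of_gt (Real.Gamma_pos_of_pos hy)
      have hne2 : X - m - 1 ≠ 0 := ne_of_gt hy
      have harg : X - ((m:ℕ)+1 : ℕ) = X - m - 1 := by push_cast; ring
      have hfac : (r:ℝ) - 1/(n:ℝ) - m = X - m - 1 := by rw [hX]; ring
      rw [harg, hGam, hfac]
      have hGX : Real.Gamma X ≠ 0 := by
        apply ne_of_gt; apply Real.Gamma_pos_of_pos; rw [hX]; linarith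
      field_simp
    
  have := claim r le_rfl
  rw [genChoose, this]
  have : X - r = 1 - 1/(n:ℝ) := by rw [hX]; ring
  rw [this]
  rw [div_div]

lemma S_bound (n r : ℕ) (hn : 2 ≤ n) (hr : 1 ≤ r) (φ : ℝ)
    (hφ0 : 0 < φ) (hφπ : φ < Real.pi) :
    ‖∑ k ∈ Finset.range (r+1),
      ((genChoose ((r:ℝ) - 1/(n:ℝ)) (r-k) * genChoose ((r:ℝ) + 1/(n:ℝ)) k : ℝ) : ℂ)
        * Complex.exp ((φ:ℂ) * Complex.I) ^ k‖
      ≤ 4 * (2 + 2*Real.cos (φ/2)) ^ (r-1) := by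
  set w := Complex.exp ((φ:ℂ) * Complex.I) with hwdef
  set c := Real.cos (φ/2) with hcdef
  set S := ∑ k ∈ Finset.range (r+1),
      ((genChoose ((r:ℝ) - 1/(n:ℝ)) (r-k) * genChoose ((r:ℝ) + 1/(n:ℝ)) k : ℝ) : ℂ)
        * w ^ k with hSdef
  have hw1 : ‖w‖ = 1 := by
    rw [hwdef]
    exact Complex.norm_exp_ofReal_mul_I φ
  have key : ∀ ρ : ℝ, 0 < ρ → ρ < 1 →
      ‖S‖ * ρ^r ≤ 4*(1+ρ^2+2*ρ*c)^(r-1) := by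
    intro ρ hρ0 hρ1
    have hB : ∀ θ : ℝ,
        ‖(1 + w * ((ρ:ℂ) * Complex.exp ((θ:ℂ) * Complex.I)))
            ^ ((((r:ℝ) + 1/(n:ℝ)):ℝ):ℂ) *
          (1 + (ρ:ℂ) * Complex.exp ((θ:ℂ) * Complex.I)) ^ ((((r:ℝ) - 1/(n:ℝ)):ℝ):ℂ)‖
          ≤ 4*(1+ρ^2+2*ρ*c)^(r-1) := by
      intro θ
      exact pointwise_bound n r hn hr φ hφ0 hφπ hρ0 hρ1 θ
    have h := coeff_extract ((r:ℝ) + 1/(n:ℝ)) ((r:ℝ) - 1/(n:ℝ))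
      (add_ne_int hn r) (sub_ne_int hn r) w hw1 r hρ0 hρ1 hB
    have hsum_eq : S = ∑ k ∈ Finset.range (r+1),
        ((genChoose ((r:ℝ) + 1/(n:ℝ)) k : ℝ):ℂ) * w^k
          * ((genChoose ((r:ℝ) - 1/(n:ℝ)) (r-k) : ℝ):ℂ) := by
      apply Finset.sum_congr rfl
      intro k _
      push_cast
      ring
    rw [hsum_eq]
    exact h
  -- limit ρ → 1⁻
  have hρk0 : ∀ k : ℕ, 0 < 1 - 1/((k:ℝ)+2) := by
    intro k
    have h2 : (0:ℝ) < (k:ℝ)+2 := by positivity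
    rw [sub_pos, div_lt_one h2]
    linarith
  have hρk1 : ∀ k : ℕ, 1 - 1/((k:ℝ)+2) < 1 := by
    intro k
    have : (0:ℝ) < 1/((k:ℝ)+2) := by positivity
    linarith
  set g : ℝ → ℝ := fun ρ => 4*(1+ρ^2+2*ρ*c)^(r-1) / ρ^r with hgdef
  have hfk : ∀ k : ℕ, ‖S‖ ≤ g (1 - 1/((k:ℝ)+2)) := by
    intro k
    have h := key _ (hρk0 k) (hρk1 k)
    rw [hgdef]
    rw [le_div_iff₀ (pow_pos (hρk0 k) r)]
    exact h
  have hg_tend : Filter.Tendsto (fun k : ℕ => g (1 - 1/((k:ℝ)+2))) Filter.atTop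
      (nhds (g 1)) := by
    have hcont : ContinuousAt g 1 := by
      apply ContinuousAt.div
      · fun_prop
      · fun_prop
      · simp
    apply hcont.tendsto.comp
    have h0 : Filter.Tendsto (fun k : ℕ => 1/((k:ℝ)+2)) Filter.atTop (nhds 0) := by
      have h1 : Tendsto (fun n : ℕ => 1 / ((n : ℝ) + 1)) atTop (nhds 0) :=
        tendsto_one_div_add_atTop_nhds_zero_nat
      have h2 := h1.comp (Filter.tendsto_add_atTop_nat 1)
      apply h2.congr
      intro k
      simp only [Function.comp_apply]
      push_cast
      ring_nf
    have := (tendsto_const_nhds (x := (1:ℝ))).sub h0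
    simpa using this
  have hfinal : ‖S‖ ≤ g 1 := ge_of_tendsto' hg_tend hfk
  have hg1 : g 1 = 4*(2+2*c)^(r-1) := by
    rw [hgdef]
    norm_num
  rwa [hg1] at hfinal

theorem Xstar_bounds (n r : ℕ) (hn : 2 ≤ n) (hr : 1 ≤ r)
    (u z : ℂ) (hu : u ≠ 0) (hz : z ≠ 0)
    (φ : ℝ) (hφ0 : 0 < φ) (hφπ : φ < Real.pi)
    (hw : z / u = Complex.exp ((φ : ℂ) * Complex.I)) :
    ‖Xstar n r z u‖ ≤ 4 * ‖u‖ ^ r *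
        (Real.Gamma (1 - 1 / (n : ℝ)) * (Nat.factorial r : ℝ) /
          Real.Gamma ((r : ℝ) + 1 - 1 / (n : ℝ))) *
        ‖1 + Complex.exp (((φ / 2 : ℝ) : ℂ) * Complex.I)‖ ^ (2 * r - 2) ∧
    ‖Xstar n r u z‖ ≤ 4 * ‖z‖ ^ r *
        (Real.Gamma (1 - 1 / (n : ℝ)) * (Nat.factorial r : ℝ) /
          Real.Gamma ((r : ℝ) + 1 - 1 / (n : ℝ))) *
        ‖1 + Complex.exp (((φ / 2 : ℝ) : ℂ) * Complex.I)‖ ^ (2 * r - 2) := by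
  obtain ⟨hn1, hn2⟩ := inv_n_lt_one hn
  have hr1 : (1:ℝ) ≤ r := by exact_mod_cast hr
  set c := Real.cos (φ/2) with hc
  set C := genChoose ((r:ℝ) - 1/(n:ℝ)) r with hCdef
  have hCpos : 0 < C := genChoose_main_pos hn r
  have hCeq := genChoose_main_eq hn r
  have hΓ1 : 0 < Real.Gamma (1 - 1/(n:ℝ)) := Real.Gamma_pos_of_pos (by linarith)
  have hΓ2 : 0 < Real.Gamma ((r:ℝ) + 1 - 1/(n:ℝ)) := Real.Gamma_pos_of_pos (by linarith)
  have hfrac : Real.Gamma (1 - 1/(n:ℝ)) * (Nat.factorial r : ℝ) /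
      Real.Gamma ((r:ℝ)+1-1/(n:ℝ)) = 1 / C := by
    rw [hCdef, hCeq, one_div_div]
  have hQ2 : (‖1 + Complex.exp (((φ/2 : ℝ):ℂ) * Complex.I)‖)^2 = 2 + 2*c := by
    have h := abs_one_add_sq 1 (φ/2)
    rw [Complex.ofReal_one, one_mul] at h
    rw [hc]
    rw [h]
    ring
  have hQpow : (‖1 + Complex.exp (((φ/2 : ℝ):ℂ) * Complex.I)‖)^(2*r-2)
      = (2+2*c)^(r-1) := by
    rw [show 2*r-2 = 2*(r-1) from by omega, pow_mul, hQ2]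
  set S := ∑ k ∈ Finset.range (r+1),
      ((genChoose ((r:ℝ) - 1/(n:ℝ)) (r-k) * genChoose ((r:ℝ) + 1/(n:ℝ)) k : ℝ):ℂ)
        * Complex.exp ((φ:ℂ)*Complex.I) ^ k with hS
  have hSb : ‖S‖ ≤ 4*(2+2*c)^(r-1) := S_bound n r hn hr φ hφ0 hφπ
  have hpos : (0:ℝ) < 2 + 2*c := by
    have : 0 ≤ c := by
      rw [hc]
      apply Real.cos_nonneg_of_mem_Icc
      constructor <;> [linarith [Real.pi_pos]; linarith]
    linarith
  constructor
  · have hX : Xstar n r z u = (u^r * S) / ((C:ℝ):ℂ) := by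
      rw [Xstar, hS, hCdef]
      rw [hw]
    rw [hX, norm_div, norm_mul, norm_pow, Complex.norm_real, Real.norm_eq_abs, abs_of_pos hCpos]
    calc ‖u‖ ^ r * ‖S‖ / C
        ≤ ‖u‖ ^ r * (4*(2+2*c)^(r-1)) / C := by gcongr
      _ = 4 * ‖u‖ ^ r * (1/C) * (2+2*c)^(r-1) := by ring
      _ = 4 * ‖u‖ ^ r *
          (Real.Gamma (1 - 1/(n:ℝ)) * (Nat.factorial r : ℝ) /
            Real.Gamma ((r:ℝ)+1-1/(n:ℝ))) *
          ‖1 + Complex.exp (((φ/2 : ℝ):ℂ) * Complex.I)‖ ^ (2*r-2) := by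
        rw [hfrac, hQpow]
  · have hconjw : (starRingEnd ℂ) (Complex.exp ((φ:ℂ)*Complex.I))
        = (Complex.exp ((φ:ℂ)*Complex.I))⁻¹ := by
      rw [← Complex.exp_conj, ← Complex.exp_neg]
      congr 1
      rw [map_mul, Complex.conj_ofReal, Complex.conj_I]
      ring
    have huz : u/z = (Complex.exp ((φ:ℂ)*Complex.I))⁻¹ := by
      rw [← hw]
      exact (inv_div z u).symm
    have hS' : (∑ k ∈ Finset.range (r+1),
        ((genChoose ((r:ℝ) - 1/(n:ℝ)) (r-k) * genChoose ((r:ℝ) + 1/(n:ℝ)) k : ℝ):ℂ)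
          * (u/z) ^ k) = (starRingEnd ℂ) S := by
      rw [hS, map_sum]
      apply Finset.sum_congr rfl
      intro k _
      rw [map_mul, map_pow, Complex.conj_ofReal, hconjw, huz]
    have hX : Xstar n r u z = (z^r * (starRingEnd ℂ) S) / ((C:ℝ):ℂ) := by
      rw [Xstar, hCdef, ← hS']
    rw [hX, norm_div, norm_mul, norm_pow, Complex.norm_real, Real.norm_eq_abs, abs_of_pos hCpos,
      Complex.norm_conj]
    calc ‖z‖ ^ r * ‖S‖ / C
        ≤ ‖z‖ ^ r * (4*(2+2*c)^(r-1)) / C := by gcongr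
      _ = 4 * ‖z‖ ^ r * (1/C) * (2+2*c)^(r-1) := by ring
      _ = 4 * ‖z‖ ^ r *
          (Real.Gamma (1 - 1/(n:ℝ)) * (Nat.factorial r : ℝ) /
            Real.Gamma ((r:ℝ)+1-1/(n:ℝ))) *
          ‖1 + Complex.exp (((φ/2 : ℝ):ℂ) * Complex.I)‖ ^ (2*r-2) := by
        rw [hfrac, hQpow]
end

section
/- Let P(X) be a real polynomial of degree n ≥ 2 and U(X) a real quadratic polynomial with nonzero discriminant such that U·P'' - (n-1)·U'·P' + (n(n-1)/2)·U''·P = 0 identically. Set Y₁ = 2UP' - nU'P, h = ((n²-1)/4)·(U'² - 2UU'') (a nonzero constant), λ = h/(n²-1). Fix a real number x with U(x)·P(x) ≠ 0, and define sequences (A_r) and (B_r) of real numbers by A₀ = 2h/3, A₁ = (2(n+1)/3)·(U(x)P'(x) - ((n-1)/2)U'(x)P(x)), B₀ = 2hx/3, B₁ = x·A₁ - 2(n+1)U(x)P(x)/3, and for r ≥ 1 by λ(n(r+1)-1)·A_{r+1} = (r+1/2)·Y₁(x)·A_r - (nr+1)·P(x)²·A_{r-1}, and the same recurrence for B_r.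 Let a, b, c, d be complex numbers with ad - bc ≠ 0 and put K_r = a·A_r + b·B_r and L_r = c·A_r + d·B_r. Then K_{r+1}·L_r ≠ K_r·L_{r+1} for all r ≥ 0. -/
open Polynomial

theorem thue_nonvanishing_determinant (n : ℕ) (hn : 2 ≤ n)
    (P U : Polynomial ℝ)
    (hPdeg : P.natDegree = n) (hUdeg : U.natDegree = 2)
    (hdisc : (U.coeff 1)^2 - 4 * U.coeff 2 * U.coeff 0 ≠ 0)
    (hode : U * (derivative (derivative P)) -
        C ((n : ℝ) - 1) * (derivative U * derivative P) +
        C ((n : ℝ) * ((n : ℝ) - 1) / 2) * (derivative (derivative U) * P) = 0)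
    (x : ℝ) (hx : U.eval x * P.eval x ≠ 0)
    (h lam Y₁ : ℝ)
    (hh : h = ((n : ℝ)^2 - 1) / 4 * ((U.coeff 1)^2 - 4 * U.coeff 2 * U.coeff 0))
    (hlam : lam = h / ((n : ℝ)^2 - 1))
    (hY₁ : Y₁ = 2 * U.eval x * (derivative P).eval x -
        (n : ℝ) * (derivative U).eval x * P.eval x)
    (A B : ℕ → ℝ)
    (hA0 : A 0 = 2 * h / 3)
    (hA1 : A 1 = 2 * ((n : ℝ) + 1) / 3 *
        (U.eval x * (derivative P).eval x -
          ((n : ℝ) - 1) / 2 * (derivative U).eval x * P.eval x))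
    (hB0 : B 0 = 2 * h * x / 3)
    (hB1 : B 1 = x * A 1 - 2 * ((n : ℝ) + 1) * U.eval x * P.eval x / 3)
    (hArec : ∀ r : ℕ, 1 ≤ r →
      lam * ((n : ℝ) * ((r : ℝ) + 1) - 1) * A (r + 1) =
        ((r : ℝ) + 1 / 2) * Y₁ * A r - ((n : ℝ) * (r : ℝ) + 1) * (P.eval x)^2 * A (r - 1))
    (hBrec : ∀ r : ℕ, 1 ≤ r →
      lam * ((n : ℝ) * ((r : ℝ) + 1) - 1) * B (r + 1) =
        ((r : ℝ) + 1 / 2) * Y₁ * B r - ((n : ℝ) * (r : ℝ) + 1) * (P.eval x)^2 * B (r - 1))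
    (a b c d : ℂ) (habcd : a * d - b * c ≠ 0)
    (K L : ℕ → ℂ)
    (hK : ∀ r : ℕ, K r = a * (A r : ℝ) + b * (B r : ℝ))
    (hL : ∀ r : ℕ, L r = c * (A r : ℝ) + d * (B r : ℝ)) :
    ∀ r : ℕ, K (r + 1) * L r ≠ K r * L (r + 1) := by

  have hn1 : (n:ℝ)^2 - 1 ≠ 0 := by
    have h2 : (2:ℝ) ≤ (n:ℝ) := by exact_mod_cast hn
    nlinarith
  have hhne : h ≠ 0 := by
    rw [hh]; exact mul_ne_zero (div_ne_zero hn1 (by norm_num)) hdisc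
  have hlamne : lam ≠ 0 := by rw [hlam]; exact div_ne_zero hhne hn1
  have hPx : P.eval x ≠ 0 := fun h0 => hx (by rw [h0, mul_zero])
  set W : ℕ → ℝ := fun r => A (r+1) * B r - A r * B (r+1) with hWdef
  have hWne : ∀ r, W r ≠ 0 := by
    intro r
    induction r with
    | zero =>
      have hW0 : W 0 = 4 * h * ((n:ℝ)+1) / 9 * (U.eval x * P.eval x) := by
        simp only [hWdef]; rw [hA0, hB0, hB1]; ring
      rw [hW0]
      have hne : (4:ℝ) * h * ((n:ℝ)+1) / 9 ≠ 0 := by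
        have : (n:ℝ) + 1 ≠ 0 := by positivity
        exact div_ne_zero (mul_ne_zero (mul_ne_zero (by norm_num) hhne) this) (by norm_num)
      exact mul_ne_zero hne hx
    | succ r ih =>
      have hA' := hArec (r+1) (by omega)
      have hB' := hBrec (r+1) (by omega)
      simp only [Nat.add_sub_cancel] at hA' hB'
      push_cast at hA' hB'
      have hc : lam * ((n:ℝ) * ((r:ℝ) + 1 + 1) - 1) ≠ 0 := by
        apply mul_ne_zero hlamne
        have h2 : (2:ℝ) ≤ (n:ℝ) := by exact_mod_cast hn
        have hr0 : (0:ℝ) ≤ (r:ℝ) := Nat.cast_nonneg r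
        nlinarith
      have hbeta : ((n:ℝ) * ((r:ℝ)+1) + 1) * (P.eval x)^2 ≠ 0 := by
        have h2 : (2:ℝ) ≤ (n:ℝ) := by exact_mod_cast hn
        have hr0 : (0:ℝ) ≤ (r:ℝ) := Nat.cast_nonneg r
        have : ((n:ℝ) * ((r:ℝ)+1) + 1) > 0 := by nlinarith
        exact mul_ne_zero (ne_of_gt this) (pow_ne_zero 2 hPx)
      have key : lam * ((n:ℝ) * ((r:ℝ) + 1 + 1) - 1) * W (r+1) =
          ((n:ℝ) * ((r:ℝ)+1) + 1) * (P.eval x)^2 * W r := by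
        simp only [hWdef]
        linear_combination B (r+1) * hA' - A (r+1) * hB'
      intro h0
      rw [h0, mul_zero] at key
      exact ih (by
        have := mul_eq_zero.mp key.symm
        rcases this with h1 | h1
        · exact absurd h1 hbeta
        · exact h1)
  intro r hKL
  rw [hK, hK, hL, hL] at hKL
  have hWC : ((W r : ℝ) : ℂ) ≠ 0 := Complex.ofReal_ne_zero.mpr (hWne r)
  apply habcd
  have key : (a * d - b * c) * ((W r : ℝ) : ℂ) = 0 := by
    simp only [hWdef]
    push_cast
    linear_combination hKL
  exact (mul_eq_zero.mp key).resolve_right hWC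
end

section
/- Let a and b be coprime rational integers such that the roots α, β of X² - aX - b satisfy that α/β is not a root of unity, and define the integer sequence (V_m) by V₀ = 0, V₁ = 1 and V_{m+1} = a·V_m + b·V_{m-1} for m ≥ 1 (so that V_m = (α^m - β^m)/(α - β)). Then for all positive integers m and n with d = gcd(m,n), one has gcd(V_m, V_n) = |V_d|. -/
private lemma igcd_add_mul (x y k : ℤ) : Int.gcd (x + k * y) y = Int.gcd x y := by
  apply Nat.dvd_antisymm
  · rw [← Int.natCast_dvd_natCast]
    refine Int.dvd_coe_gcd ?_ (Int.gcd_dvd_right _ _)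
    have h1 : (↑(Int.gcd (x + k * y) y) : ℤ) ∣ x + k * y := Int.gcd_dvd_left _ _
    have h2 : (↑(Int.gcd (x + k * y) y) : ℤ) ∣ y := Int.gcd_dvd_right _ _
    have := h1.sub (h2.mul_left k)
    simpa using this
  · rw [← Int.natCast_dvd_natCast]
    refine Int.dvd_coe_gcd ?_ (Int.gcd_dvd_right _ _)
    exact (Int.gcd_dvd_left _ _).add ((Int.gcd_dvd_right (a := x) (b := y)).mul_left k)

private lemma igcd_mul_cancel {k y : ℤ} (h : IsCoprime k y) (x : ℤ) :
    Int.gcd (k * x) y = Int.gcd x y := by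
  apply Nat.dvd_antisymm
  · rw [← Int.natCast_dvd_natCast]
    refine Int.dvd_coe_gcd ?_ (Int.gcd_dvd_right _ _)
    have hg : (↑(Int.gcd (k * x) y) : ℤ) ∣ y := Int.gcd_dvd_right _ _
    have hk : IsCoprime (↑(Int.gcd (k * x) y) : ℤ) k :=
      ((h.symm.of_isCoprime_of_dvd_left hg))
    exact hk.dvd_of_dvd_mul_right (by rw [mul_comm]; exact Int.gcd_dvd_left _ _)
  · exact Int.gcd_dvd_gcd_mul_left_left x y k

theorem lucas_gcd (a b : ℤ) (hab : IsCoprime a b)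
    (α β : ℂ) (hα : α^2 - (a : ℂ) * α - (b : ℂ) = 0) (hβ : β^2 - (a : ℂ) * β - (b : ℂ) = 0)
    (hroots : ¬ ∃ k : ℕ, 0 < k ∧ (α / β) ^ k = 1)
    (V : ℕ → ℤ) (hV0 : V 0 = 0) (hV1 : V 1 = 1)
    (hVrec : ∀ m : ℕ, 1 ≤ m → V (m + 1) = a * V m + b * V (m - 1)) :
    ∀ m n : ℕ, 0 < m → 0 < n → Int.gcd (V m) (V n) = (V (Nat.gcd m n)).natAbs := by
  have hrec : ∀ m : ℕ, V (m + 2) = a * V (m + 1) + b * V m := by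
    intro m
    have := hVrec (m + 1) (by omega)
    simpa using this
  -- addition formula
  have hadd : ∀ m n : ℕ, V (m + n + 1) = V (m + 1) * V (n + 1) + b * V m * V n := by
    intro m
    induction m using Nat.twoStepInduction with
    | zero => intro n; simp [hV0, hV1]
    | one =>
      intro n
      rw [show 1 + n + 1 = n + 2 from by omega, show (1:ℕ) + 1 = 0 + 2 from rfl, hrec, hrec,
        hV1, hV0]
      ring
    | more m ih1 ih2 =>
      intro n
      rw [show m + 2 + n + 1 = (m + n + 1) + 2 from by omega, hrec,
        show m + n + 1 + 1 = m + 1 + n + 1 from by omega, ih2 n, ih1 n,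
        show m + 2 + 1 = (m + 1) + 2 from by omega, hrec (m + 1),
        show m + 1 + 1 = m + 2 from by omega, hrec m]
      ring
  -- coprimality with b
  have hcopb : ∀ n : ℕ, IsCoprime (V (n + 1)) b := by
    intro n
    induction n with
    | zero => simpa [hV1] using isCoprime_one_left
    | succ n ih =>
      rw [hrec]
      have h2 := ((hab.mul_left ih).add_mul_right_left (V n))
      rw [show a * V (n + 1) + V n * b = a * V (n + 1) + b * V n from by ring] at h2
      exact h2
  -- consecutive terms coprime
  have hcons : ∀ n : ℕ, IsCoprime (V (n + 1)) (V n) := by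
    intro n
    induction n with
    | zero => simpa [hV0, hV1] using isCoprime_one_left
    | succ n ih =>
      rw [hrec]
      have h1 : IsCoprime (b * V n) (V (n + 1)) := ((hcopb n).symm.mul_left ih.symm)
      have h2 := h1.add_mul_right_left a
      rw [add_comm] at h2
      exact h2
  -- gcd reduction
  have hred : ∀ m n : ℕ, Int.gcd (V (m + 1 + n)) (V n) = Int.gcd (V (m + 1)) (V n) := by
    intro m n
    rw [show m + 1 + n = m + n + 1 by omega, hadd,
      show V (m + 1) * V (n + 1) + b * V m * V n
        = V (n + 1) * V (m + 1) + (b * V m) * V n by ring,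
      igcd_add_mul, igcd_mul_cancel (hcons n)]
  -- multiple reduction
  have hmul : ∀ n r k : ℕ, Int.gcd (V (r + k * n)) (V n) = Int.gcd (V r) (V n) := by
    intro n r k
    induction k with
    | zero => simp
    | succ k ih =>
      rcases Nat.eq_zero_or_pos (r + k * n) with h0 | hpos
      · have hr : r = 0 := by omega
        rw [show r + (k + 1) * n = (r + k * n) + n from by ring, h0, Nat.zero_add, hr, hV0]
        simp [Int.gcd_self, Int.gcd_zero_left]
      · obtain ⟨m, hm⟩ : ∃ m, r + k * n = m + 1 := ⟨r + k * n - 1, by omega⟩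
        rw [show r + (k + 1) * n = (r + k * n) + n by ring, hm, hred, ← hm, ih]
  have main : ∀ m n : ℕ, Int.gcd (V m) (V n) = (V (Nat.gcd m n)).natAbs := by
    intro m n
    induction m, n using Nat.gcd.induction with
    | H0 n => simp [hV0, Int.gcd_zero_left]
    | H1 m n hm ih =>
      rw [Nat.gcd_rec m n, ← ih]
      conv_lhs => rw [show n = n % m + n / m * m from (Nat.mod_add_div' n m).symm]
      rw [Int.gcd_comm, hmul]
  intro m n _ _
  exact main m n
end

section
/- Let a be a positive even integer and define the integer sequence (V_m) by V₀ = 0, V₁ = 1 and V_{m+1} = a·V_m + V_{m-1} for m ≥ 1 (so V_m = (α^m - β^m)/(α-β) where α, β are the roots of X² - aX - 1). Then for any relatively prime odd positive integers m and n, the Jacobi symbol (V_m / V_n) equals 1. -/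
private def lucasU (a : ℤ) : ℕ → ℤ
  | 0 => 0
  | 1 => 1
  | n + 2 => a * lucasU a (n + 1) + lucasU a n

private lemma lucasU_add_two (a : ℤ) (n : ℕ) :
    lucasU a (n + 2) = a * lucasU a (n + 1) + lucasU a n := by
  rw [lucasU]

private lemma lucasU_zero (a : ℤ) : lucasU a 0 = 0 := rfl
private lemma lucasU_one (a : ℤ) : lucasU a 1 = 1 := rfl

private lemma lucasU_nonneg_pos (a : ℤ) (ha : 0 < a) :
    ∀ n : ℕ, 0 ≤ lucasU a n ∧ 0 < lucasU a (n + 1) := by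
  intro n
  induction n with
  | zero => simp [lucasU_zero, lucasU_one]
  | succ k ih =>
    refine ⟨ih.2.le, ?_⟩
    rw [lucasU_add_two]
    have := mul_pos ha ih.2
    linarith [ih.1]

private lemma lucasU_pos (a : ℤ) (ha : 0 < a) (n : ℕ) (hn : 1 ≤ n) :
    0 < lucasU a n := by
  obtain ⟨t, rfl⟩ : ∃ t, n = t + 1 := ⟨n - 1, by omega⟩
  exact (lucasU_nonneg_pos a ha t).2

private lemma lucasU_mod (a : ℤ) (hae : Even a) :
    ∀ n : ℕ, (Even n → 2 ∣ lucasU a n) ∧ (Odd n → lucasU a n % 4 = 1) := by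
  obtain ⟨b, hb⟩ := hae
  have H : ∀ n : ℕ,
      ((Even n → 2 ∣ lucasU a n) ∧ (Odd n → lucasU a n % 4 = 1)) ∧
      ((Even (n+1) → 2 ∣ lucasU a (n+1)) ∧ (Odd (n+1) → lucasU a (n+1) % 4 = 1)) := by
    intro n
    induction n with
    | zero =>
      refine ⟨⟨fun _ => ?_, fun h => ?_⟩, ⟨fun h => ?_, fun _ => ?_⟩⟩
      · simp [lucasU_zero]
      · exact absurd h (by decide)
      · exact absurd h (by decide)
      · simp [lucasU_one]
    | succ k ih =>
      refine ⟨ih.2, fun he => ?_, fun ho => ?_⟩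
      · have hk : Even k := by
          rw [Nat.even_iff] at he ⊢; omega
        have h1 : 2 ∣ lucasU a k := ih.1.1 hk
        rw [lucasU_add_two]
        exact dvd_add (Dvd.dvd.mul_right (⟨b, by omega⟩ : (2:ℤ) ∣ a) _) h1
      · have hk : Odd k := by
          rw [Nat.odd_iff] at ho ⊢; omega
        have hk1 : Even (k + 1) := by
          rw [Nat.even_iff]; rw [Nat.odd_iff] at hk; omega
        have h1 : lucasU a k % 4 = 1 := ih.1.2 hk
        obtain ⟨c, hc⟩ := ih.2.1 hk1
        have h4 : (4 : ℤ) ∣ a * lucasU a (k + 1) := by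
          refine ⟨b * c, ?_⟩
          rw [hc, hb]; ring
        obtain ⟨d, hd⟩ := h4
        rw [lucasU_add_two, hd]
        omega
  exact fun n => (H n).1

private lemma lucasU_reflect (a : ℤ) (n : ℕ) :
    ∀ j i : ℕ, j + i = n →
      lucasU a (n + j) ≡ (-1) ^ (j + 1) * lucasU a i [ZMOD lucasU a n] := by
  intro j
  induction j using Nat.strong_induction_on with
  | _ j ihj =>
    match j, ihj with
    | 0, _ =>
      intro i hij
      have hi : i = n := by omega
      subst hi
      exact Int.ModEq.symm (Int.modEq_iff_dvd.mpr ⟨2, by ring_nf⟩)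
    | 1, _ =>
      intro i hij
      have hn : n = i + 1 := by omega
      subst hn
      show lucasU a (i + 1 + 1) ≡ _ [ZMOD _]
      rw [show i + 1 + 1 = i + 2 from rfl, lucasU_add_two]
      exact Int.modEq_iff_dvd.mpr ⟨-a, by ring⟩
    | (k+2), ihj =>
      intro i hij
      have h1 := ihj (k + 1) (by omega) (i + 1) (by omega)
      have h2 := ihj k (by omega) (i + 2) (by omega)
      calc lucasU a (n + (k + 2))
          = a * lucasU a (n + k + 1) + lucasU a (n + k) := lucasU_add_two a (n + k)
        _ ≡ a * ((-1) ^ (k + 1 + 1) * lucasU a (i + 1)) +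
              (-1) ^ (k + 1) * lucasU a (i + 2) [ZMOD lucasU a n] :=
            Int.ModEq.add (h1.mul_left a) h2
        _ = (-1) ^ (k + 2 + 1) * lucasU a i := by
            rw [lucasU_add_two]; ring

private lemma lucasU_trans (a : ℤ) (n : ℕ) (hn : 1 ≤ n) :
    ∀ i : ℕ, lucasU a (2 * n + i) ≡ (-1) ^ n * lucasU a i [ZMOD lucasU a n] := by
  have h0 : lucasU a (2 * n) ≡ (-1) ^ n * lucasU a 0 [ZMOD lucasU a n] := by
    have h := lucasU_reflect a n n 0 (by omega)
    rw [show n + n = 2 * n from by omega] at h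
    calc lucasU a (2 * n) ≡ (-1) ^ (n + 1) * lucasU a 0 [ZMOD lucasU a n] := h
      _ = (-1) ^ n * lucasU a 0 := by rw [lucasU_zero]; ring
  have h1 : lucasU a (2 * n + 1) ≡ (-1) ^ n * lucasU a 1 [ZMOD lucasU a n] := by
    obtain ⟨s, rfl⟩ : ∃ s, n = s + 1 := ⟨n - 1, by omega⟩
    have hs := lucasU_reflect a (s + 1) s 1 (by omega)
    rw [show s + 1 + s = 2 * s + 1 from by omega] at hs
    have hz : lucasU a (2 * (s + 1)) ≡ 0 [ZMOD lucasU a (s + 1)] := by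
      calc lucasU a (2 * (s + 1))
          = lucasU a ((s + 1) + (s + 1)) := by
            rw [show (s + 1) + (s + 1) = 2 * (s + 1) from by omega]
        _ ≡ (-1) ^ (s + 1 + 1) * lucasU a 0 [ZMOD lucasU a (s + 1)] :=
            lucasU_reflect a (s + 1) (s + 1) 0 (by omega)
        _ = 0 := by rw [lucasU_zero]; ring
    calc lucasU a (2 * (s + 1) + 1)
        = a * lucasU a (2 * (s + 1)) + lucasU a (2 * s + 1) := by
          rw [show 2 * (s + 1) + 1 = (2 * s + 1) + 2 from by omega, lucasU_add_two,
            show 2 * s + 1 + 1 = 2 * (s + 1) from by omega]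
      _ ≡ a * 0 + (-1) ^ (s + 1) * lucasU a 1 [ZMOD lucasU a (s + 1)] :=
          Int.ModEq.add (hz.mul_left a) hs
      _ = (-1) ^ (s + 1) * lucasU a 1 := by ring
  have main : ∀ i : ℕ,
      (lucasU a (2 * n + i) ≡ (-1) ^ n * lucasU a i [ZMOD lucasU a n]) ∧
      (lucasU a (2 * n + (i + 1)) ≡ (-1) ^ n * lucasU a (i + 1) [ZMOD lucasU a n]) := by
    intro i
    induction i with
    | zero => exact ⟨h0, h1⟩
    | succ k ih =>
      refine ⟨ih.2, ?_⟩
      calc lucasU a (2 * n + (k + 2))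
          = a * lucasU a (2 * n + k + 1) + lucasU a (2 * n + k) :=
            lucasU_add_two a (2 * n + k)
        _ ≡ a * ((-1) ^ n * lucasU a (k + 1)) + (-1) ^ n * lucasU a k
              [ZMOD lucasU a n] := Int.ModEq.add (ih.2.mul_left a) ih.1
        _ = (-1) ^ n * lucasU a (k + 2) := by rw [lucasU_add_two]; ring
  exact fun i => (main i).1

private lemma lucasU_jacobi (a : ℤ) (ha : 0 < a) (hae : Even a) :
    ∀ n m : ℕ, 0 < m → 0 < n → Odd m → Odd n → Nat.Coprime m n →
      jacobiSym (lucasU a m) (lucasU a n).toNat = 1 := by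
  intro n
  induction n using Nat.strong_induction_on with
  | _ n ihn =>
  intro m
  induction m using Nat.strong_induction_on with
  | _ m ihm =>
  intro hm0 hn0 hm hn hcop
  by_cases hn1 : n = 1
  · subst hn1
    rw [show (lucasU a 1).toNat = 1 from rfl]
    exact jacobiSym.one_right _
  by_cases hm1 : m = 1
  · subst hm1
    rw [lucasU_one]
    exact jacobiSym.one_left _
  have hmn : m ≠ n := by
    intro h
    rw [h, Nat.Coprime, Nat.gcd_self] at hcop
    exact hn1 hcop
  have hUn_pos : 0 < lucasU a n := lucasU_pos a ha n hn0
  have hbZ : ((lucasU a n).toNat : ℤ) = lucasU a n := Int.toNat_of_nonneg hUn_pos.le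
  have hUn4 : lucasU a n % 4 = 1 := (lucasU_mod a hae n).2 hn
  have hb4 : (lucasU a n).toNat % 4 = 1 := by omega
  have hbodd : Odd (lucasU a n).toNat := Nat.odd_iff.mpr (by omega)
  rcases lt_trichotomy m n with hlt | he | hgt
  · -- m < n : use quadratic reciprocity and swap
    have hUm_pos : 0 < lucasU a m := lucasU_pos a ha m hm0
    have hcZ : ((lucasU a m).toNat : ℤ) = lucasU a m := Int.toNat_of_nonneg hUm_pos.le
    have hUm4 : lucasU a m % 4 = 1 := (lucasU_mod a hae m).2 hm
    have hc4 : (lucasU a m).toNat % 4 = 1 := by omega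
    rw [← hcZ, jacobiSym.quadratic_reciprocity_one_mod_four hc4 hbodd, hbZ]
    exact ihn m hlt n hn0 hm0 hn hm hcop.symm
  · exact absurd he hmn
  · by_cases h2n : m < 2 * n
    · -- n < m < 2n : fold to s = 2n - m
      have hs0 : 0 < 2 * n - m := by omega
      have hsn : 2 * n - m < n := by omega
      have hsodd : Odd (2 * n - m) := by
        obtain ⟨k, hk⟩ := hm
        exact ⟨n - k - 1, by omega⟩
      have hscop : Nat.Coprime (2 * n - m) n := by
        have h1 : Nat.gcd (2 * n - m) n ∣ m := by
          have h1' : Nat.gcd (2 * n - m) n ∣ 2 * n - (2 * n - m) :=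
            Nat.dvd_sub (Dvd.dvd.mul_left (Nat.gcd_dvd_right _ _) 2)
              (Nat.gcd_dvd_left _ _)
          rwa [show 2 * n - (2 * n - m) = m from by omega] at h1'
        have h2 : Nat.gcd (2 * n - m) n ∣ Nat.gcd m n :=
          Nat.dvd_gcd h1 (Nat.gcd_dvd_right _ _)
        rw [hcop] at h2
        exact Nat.dvd_one.mp h2
      have href := lucasU_reflect a n (m - n) (2 * n - m) (by omega)
      rw [show n + (m - n) = m from by omega] at href
      have hsign : ((-1 : ℤ)) ^ (m - n + 1) = -1 := by
        refine Odd.neg_one_pow ?_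
        obtain ⟨k1, hk1⟩ := hm
        obtain ⟨k2, hk2⟩ := hn
        exact ⟨k1 - k2, by omega⟩
      rw [hsign] at href
      have hstep : jacobiSym (lucasU a m) (lucasU a n).toNat =
          jacobiSym (-1 * lucasU a (2 * n - m)) (lucasU a n).toNat :=
        jacobiSym.mod_left' (by rw [hbZ]; exact href)
      rw [hstep, jacobiSym.mul_left, jacobiSym.at_neg_one hbodd,
        ZMod.χ₄_nat_one_mod_four hb4, one_mul]
      exact ihm (2 * n - m) (by omega) hs0 hn0 hsodd hn hscop
    · -- m > 2n : reduce by 2n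
      have h2n' : 2 * n < m := by
        obtain ⟨k, hk⟩ := hm
        omega
      have hsodd : Odd (m - 2 * n) := by
        obtain ⟨k, hk⟩ := hm
        exact ⟨k - n, by omega⟩
      have hscop : Nat.Coprime (m - 2 * n) n := by
        have h1 : Nat.gcd (m - 2 * n) n ∣ m := by
          have h1' : Nat.gcd (m - 2 * n) n ∣ (m - 2 * n) + 2 * n :=
            dvd_add (Nat.gcd_dvd_left _ _)
              (Dvd.dvd.mul_left (Nat.gcd_dvd_right _ _) 2)
          rwa [show (m - 2 * n) + 2 * n = m from by omega] at h1'
        have h2 : Nat.gcd (m - 2 * n) n ∣ Nat.gcd m n :=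
          Nat.dvd_gcd h1 (Nat.gcd_dvd_right _ _)
        rw [hcop] at h2
        exact Nat.dvd_one.mp h2
      have htr := lucasU_trans a n hn0 (m - 2 * n)
      rw [show 2 * n + (m - 2 * n) = m from by omega, Odd.neg_one_pow hn] at htr
      have hstep : jacobiSym (lucasU a m) (lucasU a n).toNat =
          jacobiSym (-1 * lucasU a (m - 2 * n)) (lucasU a n).toNat :=
        jacobiSym.mod_left' (by rw [hbZ]; exact htr)
      rw [hstep, jacobiSym.mul_left, jacobiSym.at_neg_one hbodd,
        ZMod.χ₄_nat_one_mod_four hb4, one_mul]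
      exact ihm (m - 2 * n) (by omega) (by omega) hn0 hsodd hn hscop

theorem lucas_jacobi_symbol_eq_one (a : ℤ) (ha : 0 < a) (hae : Even a)
    (V : ℕ → ℤ) (hV0 : V 0 = 0) (hV1 : V 1 = 1)
    (hVrec : ∀ m : ℕ, 1 ≤ m → V (m + 1) = a * V m + V (m - 1))
    (m n : ℕ) (hm0 : 0 < m) (hn0 : 0 < n) (hm : Odd m) (hn : Odd n)
    (hcop : Nat.Coprime m n) :
    jacobiSym (V m) (V n).toNat = 1 := by
  have hVU : ∀ k : ℕ, V k = lucasU a k := by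
    intro k
    induction k using Nat.strong_induction_on with
    | _ k ih =>
      match k, ih with
      | 0, _ => exact hV0
      | 1, _ => exact hV1
      | (t+2), ih =>
        have h := hVrec (t + 1) (by omega)
        rw [show t + 1 + 1 = t + 2 from rfl, show t + 1 - 1 = t from rfl] at h
        rw [h, ih (t + 1) (by omega), ih t (by omega), lucasU_add_two]
  rw [hVU m, hVU n]
  exact lucasU_jacobi a ha hae n m hm0 hn0 hm hn hcop
end

section
/- Let t ≥ 1 be an integer. Then the four real numbers β⁽⁰⁾ = ε - ρ, β⁽¹⁾ = (ρ-1)/ε, β⁽²⁾ = ρ + ε, β⁽³⁾ = -(ρ+1)/ε are pairwise distinct and are exactly the four roots of X⁴ - tX³ - 6X² + tX + 1; that is, X⁴ - tX³ - 6X² + tX + 1 = (X - β⁽⁰⁾)(X - β⁽¹⁾)(X - β⁽²⁾)(X - β⁽³⁾). -/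
theorem quartic_roots_factorization (t : ℤ) (ht : 1 ≤ t)
    (ε ρ : ℝ)
    (hε : ε = ((t : ℝ) + Real.sqrt ((t : ℝ)^2 + 16)) / 4)
    (hρ : ρ = Real.sqrt (1 + ε^2))
    (β0 β1 β2 β3 : ℝ)
    (h0 : β0 = ε - ρ) (h1 : β1 = (ρ - 1) / ε)
    (h2 : β2 = ρ + ε) (h3 : β3 = -(ρ + 1) / ε) :
    (β0 ≠ β1 ∧ β0 ≠ β2 ∧ β0 ≠ β3 ∧ β1 ≠ β2 ∧ β1 ≠ β3 ∧ β2 ≠ β3) ∧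
    ∀ X : ℝ, X^4 - (t : ℝ) * X^3 - 6 * X^2 + (t : ℝ) * X + 1 =
      (X - β0) * (X - β1) * (X - β2) * (X - β3) := by
  have ht' : (1 : ℝ) ≤ (t : ℝ) := by exact_mod_cast ht
  have hs0 : (0:ℝ) ≤ (t : ℝ)^2 + 16 := by positivity
  have hs : Real.sqrt ((t : ℝ)^2 + 16) ^ 2 = (t : ℝ)^2 + 16 := Real.sq_sqrt hs0
  have hsnn : 0 ≤ Real.sqrt ((t : ℝ)^2 + 16) := Real.sqrt_nonneg _
  have hεpos : 0 < ε := by rw [hε]; linarith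
  have hεne : ε ≠ 0 := ne_of_gt hεpos
  have hkey : 2 * ε^2 = (t : ℝ) * ε + 2 := by
    have h4 : 4 * ε - (t : ℝ) = Real.sqrt ((t : ℝ)^2 + 16) := by rw [hε]; ring
    nlinarith [hs, h4]
  have hρ2 : ρ ^ 2 = 1 + ε ^ 2 := by
    rw [hρ]; exact Real.sq_sqrt (by positivity)
  have hρnn : 0 ≤ ρ := by rw [hρ]; exact Real.sqrt_nonneg _
  have hρgt1 : 1 < ρ := by nlinarith [hρ2, hεpos]
  have hρgtε : ε < ρ := by nlinarith [hρ2]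
  constructor
  · refine ⟨?_, ?_, ?_, ?_, ?_, ?_⟩
    · rw [h0, h1]; intro h
      have : (ε - ρ) * ε = ρ - 1 := by field_simp at h; linarith [h]
      nlinarith [this, hρ2, hεpos, hρgtε]
    · rw [h0, h2]; intro h; nlinarith [hρgt1]
    · rw [h0, h3]; intro h
      have : (ε - ρ) * ε = -(ρ + 1) := by
        field_simp at h; linarith [h]
      nlinarith [this, hρ2, hεpos, hρgtε]
    · rw [h1, h2]; intro h
      have : ρ - 1 = (ρ + ε) * ε := by field_simp at h; linarith [h]
      nlinarith [this, hρ2, hεpos, hρgt1]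
    · rw [h1, h3]; intro h
      have : ρ - 1 = -(ρ + 1) := by field_simp at h; linarith [h]
      linarith
    · rw [h2, h3]; intro h
      have heq : (ρ + ε) * ε = -(ρ + 1) := by field_simp at h; linarith [h]
      have hp : 0 < (ρ + ε) * ε := mul_pos (by linarith) hεpos
      linarith
  · intro X
    have hA : (X - β0) * (X - β2) = X^2 - 2*ε*X - 1 := by
      rw [h0, h2]; linear_combination (-1 : ℝ) * hρ2
    have hB : (X - β1) * (X - β3) = X^2 + (2*ε - (t:ℝ))*X - 1 := by
      rw [h1, h3]; field_simp
      linear_combination -X * ε * hkey - hρ2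
    calc X^4 - (t : ℝ) * X^3 - 6 * X^2 + (t : ℝ) * X + 1
        = (X^2 - 2*ε*X - 1) * (X^2 + (2*ε - (t:ℝ))*X - 1) := by
          linear_combination (2*X^2) * hkey
      _ = ((X - β0) * (X - β2)) * ((X - β1) * (X - β3)) := by rw [hA, hB]
      _ = (X - β0) * (X - β1) * (X - β2) * (X - β3) := by ring
end

section
/- Let t ≥ 5 be an integer. Then: -1/t < β⁽⁰⁾ < -1/(t+1); 1 - 2/(t+1) < β⁽¹⁾ < 1 - 2/(t+2); t + 5/(t+1) < β⁽²⁾ < t + 5/t; and -1 - 2/(t-1) < β⁽³⁾ < -1 - 2/t. -/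
set_option maxHeartbeats 1000000

theorem beta_bounds (t : ℤ) (ht : 5 ≤ t)
    (ε ρ : ℝ)
    (hε : ε = ((t : ℝ) + Real.sqrt ((t : ℝ)^2 + 16)) / 4)
    (hρ : ρ = Real.sqrt (1 + ε^2))
    (β0 β1 β2 β3 : ℝ)
    (h0 : β0 = ε - ρ) (h1 : β1 = (ρ - 1) / ε)
    (h2 : β2 = ρ + ε) (h3 : β3 = -(ρ + 1) / ε) :
    (-1 / (t : ℝ) < β0 ∧ β0 < -1 / ((t : ℝ) + 1)) ∧
    (1 - 2 / ((t : ℝ) + 1) < β1 ∧ β1 < 1 - 2 / ((t : ℝ) + 2)) ∧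
    ((t : ℝ) + 5 / ((t : ℝ) + 1) < β2 ∧ β2 < (t : ℝ) + 5 / (t : ℝ)) ∧
    (-1 - 2 / ((t : ℝ) - 1) < β3 ∧ β3 < -1 - 2 / (t : ℝ)) := by
  have htR : (5:ℝ) ≤ (t:ℝ) := by exact_mod_cast ht
  have ht0 : (0:ℝ) < (t:ℝ) := by linarith
  have ht1 : (0:ℝ) < (t:ℝ) + 1 := by linarith
  have ht2 : (0:ℝ) < (t:ℝ) + 2 := by linarith
  have htm1 : (0:ℝ) < (t:ℝ) - 1 := by linarith
  have htsq : (t:ℝ)*5 ≤ (t:ℝ)*(t:ℝ) := mul_le_mul_of_nonneg_left htR ht0.le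
  obtain ⟨s, hs0, hs2, hε4⟩ : ∃ s : ℝ, 0 ≤ s ∧ s^2 = (t:ℝ)^2 + 16 ∧ ε * 4 = (t:ℝ) + s :=
    ⟨Real.sqrt ((t:ℝ)^2 + 16), Real.sqrt_nonneg _, Real.sq_sqrt (by positivity),
      by rw [hε]; ring⟩
  clear hε
  have hεpos : 0 < ε := by nlinarith [hε4, hs0, ht0]
  have hεq : 2*ε^2 = (t:ℝ)*ε + 2 := by nlinarith [hs2, hε4]
  clear hs0 hs2 hε4
  have hρpos : 0 < ρ := by rw [hρ]; positivity
  have hρ2 : ρ^2 = 1 + ε^2 := by rw [hρ]; exact Real.sq_sqrt (by positivity)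
  clear hρ
  have hρgtε : ε < ρ := by nlinarith [hρ2]
  have hρgt1 : 1 < ρ := by nlinarith [hρ2, hεpos]
  have hρ1pos : (0:ℝ) < ρ + 1 := by linarith
  have hgt : (t:ℝ) < 2*ε := by nlinarith [hεq, hεpos]
  have h4 : 2*(t:ℝ)*ε < (t:ℝ)^2 + 4 := by nlinarith [sq_nonneg (2*ε - (t:ℝ)), hεq, hgt]
  have hεqt : 2*(t:ℝ)*ε^2 = (t:ℝ)^2*ε + 2*(t:ℝ) := by linear_combination (t:ℝ) * hεq
  have h5 : 4*(t:ℝ) < ((t:ℝ)^2+4)*(2*ε-(t:ℝ)) := by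
    have hp := mul_pos (show (0:ℝ) < (t:ℝ)^2+4-2*(t:ℝ)*ε by linarith)
      (show (0:ℝ) < 2*ε-(t:ℝ) by linarith)
    linarith [hp, hεqt, (by ring : ((t:ℝ)^2+4-2*(t:ℝ)*ε)*(2*ε-(t:ℝ))
      = ((t:ℝ)^2+4)*(2*ε-(t:ℝ)) - 4*(t:ℝ) - 2*(2*(t:ℝ)*ε^2 - (t:ℝ)^2*ε - 2*(t:ℝ)))]
  have hgt2 : (t:ℝ)^2 < 2*(t:ℝ)*ε := by
    have := mul_lt_mul_of_pos_left hgt ht0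
    linarith [this]
  -- (b): upper bound for ρ+ε
  have hPb : 0 < (t:ℝ)^2+5 - (t:ℝ)*ε := by linarith
  have hSb : (t:ℝ)^2*ρ^2 < ((t:ℝ)^2+5 - (t:ℝ)*ε)^2 := by
    rw [hρ2]
    have key : ((t:ℝ)^2+5 - (t:ℝ)*ε)^2 - (t:ℝ)^2*(1+ε^2)
        = ((t:ℝ)^2+4-2*(t:ℝ)*ε)*((t:ℝ)^2+5) + 5 := by ring
    have hp := mul_pos (show (0:ℝ) < (t:ℝ)^2+4-2*(t:ℝ)*ε by linarith)
      (show (0:ℝ) < (t:ℝ)^2+5 by positivity)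
    linarith [key, hp]
  have hb : (ρ+ε)*(t:ℝ) < (t:ℝ)^2+5 := by
    by_contra hcon
    push_neg at hcon
    have g : (t:ℝ)^2+5 - (t:ℝ)*ε ≤ ρ*(t:ℝ) := by linarith
    have g2 := mul_self_le_mul_self hPb.le g
    have e1 : (ρ*(t:ℝ))*(ρ*(t:ℝ)) = (t:ℝ)^2*ρ^2 := by ring
    have e2 : ((t:ℝ)^2+5 - (t:ℝ)*ε)*((t:ℝ)^2+5 - (t:ℝ)*ε)
        = ((t:ℝ)^2+5 - (t:ℝ)*ε)^2 := by ring
    linarith [g2, hSb, e1.ge, e2.le]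
  -- (a): lower bound for ρ+ε
  have hPa : 0 < (t:ℝ)^2+(t:ℝ)+5 - ((t:ℝ)+1)*ε := by
    have h6 := mul_nonneg (show (0:ℝ) ≤ (t:ℝ)-5 by linarith) hεpos.le
    linarith [h4, h6]
  have hQ : (0:ℝ) < 5*(t:ℝ)^3 - 16*(t:ℝ)^2 + 8*(t:ℝ) - 96 := by
    have hu : (0:ℝ) ≤ (t:ℝ) - 5 := by linarith
    have c2 := mul_nonneg hu hu
    have c3 := mul_nonneg c2 hu
    have key : 5*(t:ℝ)^3 - 16*(t:ℝ)^2 + 8*(t:ℝ) - 96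
        = 5*(((t:ℝ)-5)*((t:ℝ)-5)*((t:ℝ)-5)) + 59*(((t:ℝ)-5)*((t:ℝ)-5))
          + 223*((t:ℝ)-5) + 169 := by ring
    linarith [c2, c3, key]
  have hSa : ((t:ℝ)^2+(t:ℝ)+5 - ((t:ℝ)+1)*ε)^2 < ρ^2*((t:ℝ)+1)^2 := by
    have key : ((t:ℝ)^2+4)*((1+ε^2)*((t:ℝ)+1)^2 - ((t:ℝ)^2+(t:ℝ)+5 - ((t:ℝ)+1)*ε)^2)
        = (((t:ℝ)+1)*((t:ℝ)^2+(t:ℝ)+5))*(((t:ℝ)^2+4)*(2*ε-(t:ℝ)) - 4*(t:ℝ))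
          + (5*(t:ℝ)^3 - 16*(t:ℝ)^2 + 8*(t:ℝ) - 96) := by ring
    have hpp : 0 < (((t:ℝ)+1)*((t:ℝ)^2+(t:ℝ)+5))*(((t:ℝ)^2+4)*(2*ε-(t:ℝ)) - 4*(t:ℝ)) :=
      mul_pos (mul_pos ht1 (by positivity)) (by linarith)
    have h1' : ((t:ℝ)^2+4)*0 < ((t:ℝ)^2+4)*((1+ε^2)*((t:ℝ)+1)^2
        - ((t:ℝ)^2+(t:ℝ)+5 - ((t:ℝ)+1)*ε)^2) := by
      rw [key]; linarith
    have h2' := lt_of_mul_lt_mul_left h1' (by positivity : (0:ℝ) ≤ (t:ℝ)^2+4)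
    have e1 : ρ^2*((t:ℝ)+1)^2 = (1+ε^2)*((t:ℝ)+1)^2 := by rw [hρ2]
    linarith [h2', e1.ge]
  have ha : (t:ℝ)^2+(t:ℝ)+5 < (ρ+ε)*((t:ℝ)+1) := by
    by_contra hcon
    push_neg at hcon
    have g : ρ*((t:ℝ)+1) ≤ (t:ℝ)^2+(t:ℝ)+5 - ((t:ℝ)+1)*ε := by linarith
    have g2 := mul_self_le_mul_self (by positivity : (0:ℝ) ≤ ρ*((t:ℝ)+1)) g
    have e1 : (ρ*((t:ℝ)+1))*(ρ*((t:ℝ)+1)) = ρ^2*((t:ℝ)+1)^2 := by ring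
    have e2 : ((t:ℝ)^2+(t:ℝ)+5 - ((t:ℝ)+1)*ε)*((t:ℝ)^2+(t:ℝ)+5 - ((t:ℝ)+1)*ε)
        = ((t:ℝ)^2+(t:ℝ)+5 - ((t:ℝ)+1)*ε)^2 := by ring
    linarith [g2, hSa, e1.le, e2.le]
  -- (c): lower bound for β1
  have hSc : (((t:ℝ)-1)*ε + ((t:ℝ)+1))^2 < ρ^2*((t:ℝ)+1)^2 := by
    have key : (1+ε^2)*((t:ℝ)+1)^2 - (((t:ℝ)-1)*ε + ((t:ℝ)+1))^2
        = 2*ε*(2*(t:ℝ)*ε - (t:ℝ)^2 + 1) := by ring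
    have hp := mul_pos hεpos (show (0:ℝ) < 2*(t:ℝ)*ε - (t:ℝ)^2 + 1 by linarith)
    have e1 : ρ^2*((t:ℝ)+1)^2 = (1+ε^2)*((t:ℝ)+1)^2 := by rw [hρ2]
    linarith [key, hp, e1.ge]
  have hc : ((t:ℝ)-1)*ε < ((t:ℝ)+1)*(ρ-1) := by
    by_contra hcon
    push_neg at hcon
    have g : ρ*((t:ℝ)+1) ≤ ((t:ℝ)-1)*ε + ((t:ℝ)+1) := by nlinarith [hcon, ht1]
    have g2 := mul_self_le_mul_self (by positivity : (0:ℝ) ≤ ρ*((t:ℝ)+1)) g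
    have e1 : (ρ*((t:ℝ)+1))*(ρ*((t:ℝ)+1)) = ρ^2*((t:ℝ)+1)^2 := by ring
    have e2 : (((t:ℝ)-1)*ε + ((t:ℝ)+1))*(((t:ℝ)-1)*ε + ((t:ℝ)+1))
        = (((t:ℝ)-1)*ε + ((t:ℝ)+1))^2 := by ring
    linarith [g2, hSc, e1.le, e2.le]
  -- (d): upper bound for β1
  have hd1 : (2*(t:ℝ)+2)*ε < (t:ℝ)^2+2*(t:ℝ) := by
    have hp := mul_pos (show (0:ℝ) < (t:ℝ)^2+4-2*(t:ℝ)*ε by linarith) ht1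
    have key : ((t:ℝ)^2+4-2*(t:ℝ)*ε)*((t:ℝ)+1)
        = ((t:ℝ)^2+2*(t:ℝ))*(t:ℝ) - ((2*(t:ℝ)+2)*ε)*(t:ℝ) - ((t:ℝ)*(t:ℝ) - 4*(t:ℝ) - 4) := by
      ring
    have hq : (0:ℝ) ≤ (t:ℝ)*(t:ℝ) - 4*(t:ℝ) - 4 := by linarith [htsq]
    have hmain : ((2*(t:ℝ)+2)*ε)*(t:ℝ) < ((t:ℝ)^2+2*(t:ℝ))*(t:ℝ) := by linarith [hp, key, hq]
    exact lt_of_mul_lt_mul_right hmain ht0.le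
  have hSd : ((t:ℝ)+2)^2*ρ^2 < ((t:ℝ)*ε + ((t:ℝ)+2))^2 := by
    have key : ((t:ℝ)*ε + ((t:ℝ)+2))^2 - ((t:ℝ)+2)^2*(1+ε^2)
        = 2*ε*((t:ℝ)^2+2*(t:ℝ) - (2*(t:ℝ)+2)*ε) := by ring
    have hp := mul_pos hεpos (show (0:ℝ) < (t:ℝ)^2+2*(t:ℝ) - (2*(t:ℝ)+2)*ε by linarith)
    have e1 : ((t:ℝ)+2)^2*ρ^2 = ((t:ℝ)+2)^2*(1+ε^2) := by rw [hρ2]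
    linarith [key, hp, e1.le]
  have hd : ((t:ℝ)+2)*(ρ-1) < (t:ℝ)*ε := by
    by_contra hcon
    push_neg at hcon
    have g : (t:ℝ)*ε + ((t:ℝ)+2) ≤ ρ*((t:ℝ)+2) := by linarith
    have g2 := mul_self_le_mul_self (by positivity : (0:ℝ) ≤ (t:ℝ)*ε + ((t:ℝ)+2)) g
    have e1 : (ρ*((t:ℝ)+2))*(ρ*((t:ℝ)+2)) = ((t:ℝ)+2)^2*ρ^2 := by ring
    have e2 : ((t:ℝ)*ε + ((t:ℝ)+2))*((t:ℝ)*ε + ((t:ℝ)+2)) = ((t:ℝ)*ε + ((t:ℝ)+2))^2 := by ring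
    linarith [g2, hSd, e1.le, e2.le]
  -- sum bounds
  have hsumgt : (t:ℝ) < ρ+ε := by
    have hmain : (t:ℝ)*((t:ℝ)+1) < (ρ+ε)*((t:ℝ)+1) := by linarith [ha]
    exact lt_of_mul_lt_mul_right hmain (by linarith)
  have hsumlt : ρ+ε < (t:ℝ)+1 := by
    have hmain : (ρ+ε)*(t:ℝ) < ((t:ℝ)+1)*(t:ℝ) := by linarith [hb, htsq]
    exact lt_of_mul_lt_mul_right hmain ht0.le
  have hprod : (ρ-ε)*(ρ+ε) = 1 := by linear_combination hρ2
  refine ⟨⟨?_, ?_⟩, ⟨?_, ?_⟩, ⟨?_, ?_⟩, ⟨?_, ?_⟩⟩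
  · rw [h0, div_lt_iff₀ ht0]
    have hp := mul_pos (show (0:ℝ) < ρ-ε by linarith) (show (0:ℝ) < ρ+ε-(t:ℝ) by linarith)
    have key : (ρ-ε)*(ρ+ε-(t:ℝ)) = (ρ-ε)*(ρ+ε) - ((ρ-ε)*(t:ℝ)) := by ring
    have e1 : (ε-ρ)*(t:ℝ) = -((ρ-ε)*(t:ℝ)) := by ring
    linarith [hp, key, hprod, e1.le, e1.ge]
  · rw [h0, lt_div_iff₀ ht1]
    have hp := mul_pos (show (0:ℝ) < ρ-ε by linarith) (show (0:ℝ) < (t:ℝ)+1-(ρ+ε) by linarith)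
    have key : (ρ-ε)*((t:ℝ)+1-(ρ+ε)) = (ρ-ε)*((t:ℝ)+1) - (ρ-ε)*(ρ+ε) := by ring
    have e1 : (ε-ρ)*((t:ℝ)+1) = -((ρ-ε)*((t:ℝ)+1)) := by ring
    linarith [hp, key, hprod, e1.le, e1.ge]
  · rw [h1, show 1 - 2/((t:ℝ)+1) = ((t:ℝ)-1)/((t:ℝ)+1) by field_simp; ring,
      div_lt_div_iff₀ ht1 hεpos]
    linarith [hc, (by ring : ((t:ℝ)+1)*(ρ-1) = (ρ-1)*((t:ℝ)+1)).le,
      (by ring : ((t:ℝ)+1)*(ρ-1) = (ρ-1)*((t:ℝ)+1)).ge]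
  · rw [h1, show 1 - 2/((t:ℝ)+2) = (t:ℝ)/((t:ℝ)+2) by field_simp; ring,
      div_lt_div_iff₀ hεpos ht2]
    linarith [hd, (by ring : ((t:ℝ)+2)*(ρ-1) = (ρ-1)*((t:ℝ)+2)).le,
      (by ring : ((t:ℝ)+2)*(ρ-1) = (ρ-1)*((t:ℝ)+2)).ge]
  · rw [h2, show (t:ℝ) + 5/((t:ℝ)+1) = ((t:ℝ)^2+(t:ℝ)+5)/((t:ℝ)+1) by field_simp,
      div_lt_iff₀ ht1]
    linarith [ha]
  · rw [h2, show (t:ℝ) + 5/(t:ℝ) = ((t:ℝ)^2+5)/(t:ℝ) by field_simp,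
      lt_div_iff₀ ht0]
    linarith [hb]
  · rw [h3, show -1 - 2/((t:ℝ)-1) = -(((t:ℝ)+1)/((t:ℝ)-1)) by field_simp; ring, neg_div]
    apply neg_lt_neg
    rw [div_lt_div_iff₀ hεpos htm1]
    have hc' := mul_lt_mul_of_pos_right hc hρ1pos
    have hρ2t : ((t:ℝ)+1)*ρ^2 = ((t:ℝ)+1)*(1+ε^2) := by linear_combination ((t:ℝ)+1)*hρ2
    have key : ((t:ℝ)+1)*(ρ-1)*(ρ+1) = ((t:ℝ)+1)*ρ^2 - ((t:ℝ)+1) := by ring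
    have hmain : ((ρ+1)*((t:ℝ)-1))*ε < (((t:ℝ)+1)*ε)*ε := by
      have e3 : ((ρ+1)*((t:ℝ)-1))*ε = ((t:ℝ)-1)*ε*(ρ+1) := by ring
      have e4 : (((t:ℝ)+1)*ε)*ε = ((t:ℝ)+1)*(1+ε^2) - ((t:ℝ)+1) := by ring
      linarith [hc', hρ2t, key, e3.le, e3.ge, e4.le, e4.ge]
    exact lt_of_mul_lt_mul_right hmain hεpos.le
  · rw [h3, show -1 - 2/(t:ℝ) = -(((t:ℝ)+2)/(t:ℝ)) by field_simp; ring, neg_div]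
    apply neg_lt_neg
    rw [div_lt_div_iff₀ ht0 hεpos]
    have hd' := mul_lt_mul_of_pos_right hd hρ1pos
    have hρ2t : ((t:ℝ)+2)*ρ^2 = ((t:ℝ)+2)*(1+ε^2) := by linear_combination ((t:ℝ)+2)*hρ2
    have key : ((t:ℝ)+2)*(ρ-1)*(ρ+1) = ((t:ℝ)+2)*ρ^2 - ((t:ℝ)+2) := by ring
    have hmain : (((t:ℝ)+2)*ε)*ε < ((ρ+1)*(t:ℝ))*ε := by
      have e3 : (t:ℝ)*ε*(ρ+1) = ((ρ+1)*(t:ℝ))*ε := by ring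
      have e4 : (((t:ℝ)+2)*ε)*ε = ((t:ℝ)+2)*(1+ε^2) - ((t:ℝ)+2) := by ring
      linarith [hd', hρ2t, key, e3.le, e3.ge, e4.le, e4.ge]
    exact lt_of_mul_lt_mul_right hmain hεpos.le
end

section
/- Let t > 4 be a real number and set ω = ε/ρ + i/ρ. Then ω⁴ = (t²-16)/(t²+16) + i·8t/(t²+16), and with a(0) = -5, b(0) = 5, c(0) = -5i, d(0) = -5i, a(1) = 5i - 5, b(1) = 5i + 5, c(1) = -5 - 5i, d(1) = 5 - 5i, one has for j = 0 and j = 1: β⁽ʲ⁾·(a(j)·ω - b(j)) - (c(j)·ω - d(j)) = 0. -/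
theorem omega_fourth_power_and_root_identities (t : ℝ) (ht : 4 < t)
    (ε ρ : ℝ)
    (hε : ε = (t + Real.sqrt (t^2 + 16)) / 4)
    (hρ : ρ = Real.sqrt (1 + ε^2))
    (β0 β1 : ℝ) (h0 : β0 = ε - ρ) (h1 : β1 = (ρ - 1) / ε)
    (ω : ℂ) (hω : ω = ((ε / ρ : ℝ) : ℂ) + Complex.I * ((1 / ρ : ℝ) : ℂ)) :
    ω^4 = (((t^2 - 16) / (t^2 + 16) : ℝ) : ℂ) +
        Complex.I * ((8 * t / (t^2 + 16) : ℝ) : ℂ) ∧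
    (β0 : ℂ) * ((-5) * ω - 5) - ((-5 * Complex.I) * ω - (-5 * Complex.I)) = 0 ∧
    (β1 : ℂ) * ((5 * Complex.I - 5) * ω - (5 * Complex.I + 5)) -
        ((-5 - 5 * Complex.I) * ω - (5 - 5 * Complex.I)) = 0 := by
  have hs : Real.sqrt (t^2 + 16) ^ 2 = t^2 + 16 := Real.sq_sqrt (by positivity)
  have hεpos : 0 < ε := by
    have := Real.sqrt_nonneg (t^2 + 16)
    rw [hε]; linarith
  have hε2 : 2 * ε^2 = ε * t + 2 := by
    have h4 : 4 * ε - t = Real.sqrt (t^2 + 16) := by rw [hε]; ring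
    have := hs
    rw [← h4] at this
    nlinarith [this]
  have hρ2 : ρ^2 = 1 + ε^2 := by rw [hρ]; exact Real.sq_sqrt (by positivity)
  have hρpos : 0 < ρ := by rw [hρ]; exact Real.sqrt_pos.mpr (by positivity)
  have hρc : (ρ : ℂ) ≠ 0 := by exact_mod_cast hρpos.ne'
  have hεc : (ε : ℂ) ≠ 0 := by exact_mod_cast hεpos.ne'
  have h16 : ((16 : ℂ) + (t : ℂ)^2) ≠ 0 := by
    have h : (0:ℝ) < 16 + t^2 := by positivity
    have := h.ne'
    intro hc
    exact this (by exact_mod_cast hc)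
  have hρ2c : (ρ : ℂ)^2 = 1 + (ε : ℂ)^2 := by exact_mod_cast hρ2
  have hε2c : 2 * (ε : ℂ)^2 = (ε : ℂ) * (t : ℂ) + 2 := by exact_mod_cast hε2
  have hω' : ω = ((ε : ℂ) + Complex.I) / (ρ : ℂ) := by
    rw [hω]; push_cast; ring
  have key : ((ε:ℂ) + Complex.I)^4 * ((t:ℂ)^2 + 16) =
      (((t:ℂ)^2 - 16) + 8 * (t:ℂ) * Complex.I) * ((ρ:ℂ)^2)^2 := by
    linear_combination
      (8*((ε:ℂ)*t + 2*(ε:ℂ)^2 - 2) + Complex.I*(-4*((ε:ℂ)^2-1)*t + 32*(ε:ℂ))) * hε2c +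
      ((6*(ε:ℂ)^2 + 4*(ε:ℂ)*Complex.I + Complex.I^2 - 1) * ((t:ℂ)^2+16)) * Complex.I_sq -
      ((((t:ℂ)^2 - 16) + 8*(t:ℂ)*Complex.I) * ((ρ:ℂ)^2 + 1 + (ε:ℂ)^2)) * hρ2c
  refine ⟨?_, ?_, ?_⟩
  · have h16' : ((t:ℂ)^2 + 16) ≠ 0 := by
      intro hc; exact h16 (by linear_combination hc)
    have expand : (((t^2 - 16) / (t^2 + 16) : ℝ) : ℂ) +
        Complex.I * ((8 * t / (t^2 + 16) : ℝ) : ℂ) =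
        ((t:ℂ)^2 - 16 + 8 * (t:ℂ) * Complex.I) / ((t:ℂ)^2 + 16) := by
      push_cast; ring
    rw [hω', expand, div_pow, div_eq_div_iff (pow_ne_zero 4 hρc) h16']
    linear_combination key
  · rw [hω', h0]
    push_cast
    field_simp
    linear_combination (5:ℂ)*hρ2c + 5*Complex.I_sq
  · rw [hω', h1]
    push_cast
    field_simp
    linear_combination (-5*(1+Complex.I))*hρ2c + (5*((ε:ℂ) - 1 + (ρ:ℂ)))*Complex.I_sq
end
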